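/- arXiv:1701.05126 — 7 statements merged into one kernel-verified Lean document; each statement's English description precedes it below -/
import Mathlib

section
/- For complex $q$ with $0<|q|<1$, the limit as $N\to\infty$ of the even-indexed partial sums $\sum_{n=0}^{2N-1}(-1)^n (q;q)_n$ of the alternating Kontsevich series exists and equals $\sum_{n=0}^\infty q^{2n+1}(q;q)_{2n}$. -/
open Filter Topology
set_option maxHeartbeats 1000000

/-- The q-Pochhammer symbol `(q;q)_n = ∏_{j=1}^n (1 - q^j)`. -/
noncomputable def qPoch (q : ℂ) (n : ℕ) : ℂ := ∏ j ∈ Finset.range n, (1 - q ^ (j + 1))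

lemma qPoch_bound (q : ℂ) (hq : ‖q‖ < 1) (n : ℕ) :
    ‖qPoch q n‖ ≤ Real.exp (1 / (1 - ‖q‖)) := by
  have hq1 : (0:ℝ) < 1 - ‖q‖ := by linarith
  calc ‖qPoch q n‖ ≤ ∏ j ∈ Finset.range n, ‖1 - q ^ (j + 1)‖ := Finset.norm_prod_le _ _
    _ ≤ ∏ j ∈ Finset.range n, Real.exp (‖q‖ ^ (j + 1)) := by
        apply Finset.prod_le_prod
        · intro i _; positivity
        · intro i _
          calc ‖1 - q ^ (i + 1)‖ ≤ ‖(1:ℂ)‖ + ‖q ^ (i+1)‖ := norm_sub_le _ _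
            _ = 1 + ‖q‖ ^ (i+1) := by simp [norm_pow]
            _ = ‖q‖ ^ (i+1) + 1 := add_comm _ _
            _ ≤ Real.exp (‖q‖ ^ (i+1)) := Real.add_one_le_exp _
    _ = Real.exp (∑ j ∈ Finset.range n, ‖q‖ ^ (j + 1)) := by
        rw [Real.exp_sum]
    _ ≤ Real.exp (1 / (1 - ‖q‖)) := by
        apply Real.exp_le_exp.mpr
        calc ∑ j ∈ Finset.range n, ‖q‖ ^ (j + 1)
            ≤ ∑ j ∈ Finset.range n, ‖q‖ ^ j := by
              apply Finset.sum_le_sum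
              intro i _
              exact pow_le_pow_of_le_one (norm_nonneg q) hq.le (Nat.le_succ i)
          _ ≤ ∑' j : ℕ, ‖q‖ ^ j :=
              Summable.sum_le_tsum _ (fun i _ => by positivity)
                (summable_geometric_of_lt_one (norm_nonneg q) hq)
          _ = (1 - ‖q‖)⁻¹ := tsum_geometric_of_lt_one (norm_nonneg q) hq
          _ = 1 / (1 - ‖q‖) := (one_div _).symm

theorem strangeF_even_partial_sums (q : ℂ) (hq0 : q ≠ 0) (hq : ‖q‖ < 1) :
    Summable (fun n : ℕ => q ^ (2 * n + 1) * qPoch q (2 * n)) ∧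
    Tendsto (fun N : ℕ => ∑ n ∈ Finset.range (2 * N), (-1 : ℂ) ^ n * qPoch q n)
      atTop (𝓝 (∑' n : ℕ, q ^ (2 * n + 1) * qPoch q (2 * n))) := by
  have hsum : Summable (fun n : ℕ => q ^ (2 * n + 1) * qPoch q (2 * n)) := by
    apply Summable.of_norm
    refine Summable.of_nonneg_of_le (fun n => norm_nonneg _) (fun n => ?_)
      (((summable_geometric_of_lt_one (by positivity)
        (by nlinarith [norm_nonneg q] : ‖q‖^2 < 1))).mul_left (Real.exp (1 / (1 - ‖q‖))))
    · rw [norm_mul, norm_pow]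
      calc ‖q‖ ^ (2*n+1) * ‖qPoch q (2*n)‖
          ≤ ‖q‖ ^ (2*n+1) * Real.exp (1 / (1 - ‖q‖)) := by
            apply mul_le_mul_of_nonneg_left (qPoch_bound q hq _) (by positivity)
        _ ≤ Real.exp (1 / (1 - ‖q‖)) * (‖q‖^2) ^ n := by
            rw [mul_comm, ← pow_mul]
            apply mul_le_mul_of_nonneg_left _ (Real.exp_pos _).le
            exact pow_le_pow_of_le_one (norm_nonneg q) hq.le (by omega)
  refine ⟨hsum, ?_⟩
  have key : ∀ N : ℕ, ∑ n ∈ Finset.range (2 * N), (-1 : ℂ) ^ n * qPoch q n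
      = ∑ n ∈ Finset.range N, q ^ (2 * n + 1) * qPoch q (2 * n) := by
    intro N
    induction N with
    | zero => simp
    | succ N ih =>
      have h2 : 2 * (N + 1) = (2 * N + 1) + 1 := by ring
      rw [h2, Finset.sum_range_succ, Finset.sum_range_succ, ih, Finset.sum_range_succ]
      have : qPoch q (2 * N + 1) = qPoch q (2 * N) * (1 - q ^ (2 * N + 1)) := by
        rw [qPoch, Finset.prod_range_succ]; rfl
      rw [this]
      ring_nf
      simp only [show ((-1:ℂ)) ^ (N * 2) = 1 by simp [pow_mul'], mul_one]
  simp only [key]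
  exact hsum.hasSum.tendsto_sum_nat
end

section
/- For complex $q$ with $0<|q|<1$, Zagier's function $\sigma(q) = 1 + \sum_{n=0}^\infty (-1)^n q^{n+1}(q;q)_n$ satisfies $\sigma(q) - (q;q)_\infty = 2\sum_{n=0}^\infty q^{2n+1}(q;q)_{2n}$. -/
open Filter Topology

section aux

variable {q : ℂ}

lemma norm_pow_lt (hq : ‖q‖ < 1) (j : ℕ) : ‖q ^ (j + 1)‖ < 1 := by
  rw [norm_pow]
  exact pow_lt_one₀ (norm_nonneg q) hq (Nat.succ_ne_zero j)

lemma one_sub_ne (hq : ‖q‖ < 1) (j : ℕ) : (1 : ℂ) - q ^ (j + 1) ≠ 0 := by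
  intro h
  have h1 : q ^ (j + 1) = 1 := by linear_combination -h
  have h2 := norm_pow_lt hq j
  rw [h1] at h2
  simp at h2

lemma summable_geom_aux (hq : ‖q‖ < 1) (C : ℝ) :
    Summable (fun j : ℕ => C * ‖q‖ ^ (j + 1)) := by
  have := (summable_geometric_of_lt_one (norm_nonneg q) hq).mul_left (C * ‖q‖)
  refine this.congr fun j => ?_
  rw [pow_succ']
  ring

lemma summable_log (hq : ‖q‖ < 1) :
    Summable (fun j : ℕ => Complex.log (1 - q ^ (j + 1))) := by
  set C : ℝ := (1 - ‖q‖)⁻¹ / 2 + 1 with hC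
  refine Summable.of_norm_bounded (summable_geom_aux hq C) fun j => ?_
  have hz : ‖(-(q ^ (j + 1)))‖ < 1 := by rw [norm_neg]; exact norm_pow_lt hq j
  have h1 : (1 : ℂ) - q ^ (j + 1) = 1 + -(q ^ (j + 1)) := by ring
  rw [h1]
  refine (Complex.norm_log_one_add_le hz).trans ?_
  rw [norm_neg, norm_pow]
  set r := ‖q‖ ^ (j + 1) with hr
  have hr0 : 0 ≤ r := pow_nonneg (norm_nonneg q) _
  have hrq : r ≤ ‖q‖ := by
    rw [hr]
    calc ‖q‖ ^ (j + 1) ≤ ‖q‖ ^ 1 :=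
          pow_le_pow_of_le_one (norm_nonneg q) hq.le (Nat.one_le_iff_ne_zero.2 (Nat.succ_ne_zero j))
      _ = ‖q‖ := pow_one _
  have hq0 : 0 ≤ ‖q‖ := norm_nonneg q
  have hpos : 0 < 1 - ‖q‖ := by linarith
  have hinv : (1 - r)⁻¹ ≤ (1 - ‖q‖)⁻¹ := by
    apply inv_anti₀ hpos
    linarith
  have hr1 : r ≤ 1 := hrq.trans hq.le
  have h2 : r ^ 2 * (1 - r)⁻¹ / 2 ≤ r * (1 - ‖q‖)⁻¹ / 2 := by
    have hrr : r ^ 2 ≤ r := by nlinarith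
    have h0 : 0 ≤ (1 - r)⁻¹ := inv_nonneg.2 (by linarith)
    have h3 : r ^ 2 * (1 - r)⁻¹ ≤ r * (1 - ‖q‖)⁻¹ :=
      mul_le_mul hrr hinv h0 hr0
    linarith
  calc r ^ 2 * (1 - r)⁻¹ / 2 + r ≤ r * (1 - ‖q‖)⁻¹ / 2 + r := by linarith
    _ = C * r := by rw [hC]; ring

set_option maxHeartbeats 1000000 in
lemma multipliable_aux (hq : ‖q‖ < 1) :
    Multipliable (fun j : ℕ => (1 : ℂ) - q ^ (j + 1)) := by
  exact Complex.multipliable_of_summable_log (summable_log hq)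

lemma qPoch_norm_le (hq : ‖q‖ < 1) (n : ℕ) :
    ‖qPoch q n‖ ≤ Real.exp ((1 - ‖q‖)⁻¹) := by
  have hpos : 0 < 1 - ‖q‖ := by linarith
  calc ‖qPoch q n‖ = ‖∏ j ∈ Finset.range n, (1 - q ^ (j + 1))‖ := rfl
    _ ≤ ∏ j ∈ Finset.range n, ‖(1 : ℂ) - q ^ (j + 1)‖ := Finset.norm_prod_le _ _
    _ ≤ ∏ j ∈ Finset.range n, Real.exp (‖q‖ ^ (j + 1)) := by
        apply Finset.prod_le_prod (fun _ _ => norm_nonneg _)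
        intro j _
        calc ‖(1 : ℂ) - q ^ (j + 1)‖ ≤ ‖(1 : ℂ)‖ + ‖q ^ (j + 1)‖ := norm_sub_le _ _
          _ = 1 + ‖q‖ ^ (j + 1) := by rw [norm_one, norm_pow]
          _ ≤ Real.exp (‖q‖ ^ (j + 1)) := by
              have := Real.add_one_le_exp (‖q‖ ^ (j + 1))
              linarith
    _ = Real.exp (∑ j ∈ Finset.range n, ‖q‖ ^ (j + 1)) := by rw [Real.exp_sum]
    _ ≤ Real.exp ((1 - ‖q‖)⁻¹) := by
        apply Real.exp_le_exp.2
        calc ∑ j ∈ Finset.range n, ‖q‖ ^ (j + 1)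
            ≤ ∑ j ∈ Finset.range n, ‖q‖ ^ j := by
              apply Finset.sum_le_sum
              intro j _
              exact pow_le_pow_of_le_one (norm_nonneg q) hq.le (Nat.le_succ j)
          _ ≤ ∑' j : ℕ, ‖q‖ ^ j := (summable_geometric_of_lt_one (norm_nonneg q) hq).sum_le_tsum _ (fun j _ => pow_nonneg (norm_nonneg q) j)
          _ = (1 - ‖q‖)⁻¹ := tsum_geometric_of_lt_one (norm_nonneg q) hq

lemma summable_of_norm_le_geom (hq : ‖q‖ < 1) {f : ℕ → ℂ}
    (hf : ∀ n, ‖f n‖ ≤ Real.exp ((1 - ‖q‖)⁻¹) * ‖q‖ ^ (n + 1)) : Summable f :=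
  Summable.of_norm_bounded (summable_geom_aux hq _) hf

lemma summable_a (hq : ‖q‖ < 1) : Summable (fun n : ℕ => q ^ (n + 1) * qPoch q n) := by
  refine summable_of_norm_le_geom hq fun n => ?_
  rw [norm_mul, norm_pow, mul_comm]
  exact mul_le_mul_of_nonneg_right (qPoch_norm_le hq n) (pow_nonneg (norm_nonneg q) _)

lemma summable_b (hq : ‖q‖ < 1) :
    Summable (fun n : ℕ => (-1 : ℂ) ^ n * q ^ (n + 1) * qPoch q n) := by
  refine summable_of_norm_le_geom hq fun n => ?_
  rw [norm_mul, norm_mul, norm_pow, norm_pow]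
  simp only [norm_neg, norm_one, one_pow, one_mul]
  rw [mul_comm]
  exact mul_le_mul_of_nonneg_right (qPoch_norm_le hq n) (pow_nonneg (norm_nonneg q) _)

lemma telescope (q : ℂ) (N : ℕ) :
    qPoch q N = 1 - ∑ n ∈ Finset.range N, q ^ (n + 1) * qPoch q n := by
  induction N with
  | zero => simp [qPoch]
  | succ N ih =>
    rw [qPoch, Finset.prod_range_succ, ← qPoch, Finset.sum_range_succ, ih]
    ring

lemma tprod_eq (hq : ‖q‖ < 1) :
    (∏' j : ℕ, ((1 : ℂ) - q ^ (j + 1))) = 1 - ∑' n : ℕ, q ^ (n + 1) * qPoch q n := by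
  have hm := multipliable_aux hq
  have h1 : Tendsto (fun N => ∏ j ∈ Finset.range N, ((1 : ℂ) - q ^ (j + 1))) atTop
      (𝓝 (∏' j : ℕ, ((1 : ℂ) - q ^ (j + 1)))) := hm.hasProd.tendsto_prod_nat
  have h2 : Tendsto (fun N => 1 - ∑ n ∈ Finset.range N, q ^ (n + 1) * qPoch q n) atTop
      (𝓝 (1 - ∑' n : ℕ, q ^ (n + 1) * qPoch q n)) :=
    ((summable_a hq).hasSum.tendsto_sum_nat).const_sub 1
  have heq : (fun N => ∏ j ∈ Finset.range N, ((1 : ℂ) - q ^ (j + 1)))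
      = fun N => 1 - ∑ n ∈ Finset.range N, q ^ (n + 1) * qPoch q n := by
    funext N; exact telescope q N
  rw [heq] at h1
  exact tendsto_nhds_unique h1 h2

end aux

theorem sigma_minus_product (q : ℂ) (hq0 : q ≠ 0) (hq : ‖q‖ < 1) :
    (1 + ∑' n : ℕ, (-1 : ℂ) ^ n * q ^ (n + 1) * qPoch q n)
      - (∏' j : ℕ, (1 - q ^ (j + 1)))
      = 2 * ∑' n : ℕ, q ^ (2 * n + 1) * qPoch q (2 * n) := by
  rw [tprod_eq hq]
  have ha := summable_a hq
  have hb := summable_b hq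
  set f : ℕ → ℂ := fun n => ((-1 : ℂ) ^ n + 1) * (q ^ (n + 1) * qPoch q n) with hf
  have hsum : (∑' n : ℕ, (-1 : ℂ) ^ n * q ^ (n + 1) * qPoch q n)
      + (∑' n : ℕ, q ^ (n + 1) * qPoch q n) = ∑' n : ℕ, f n := by
    rw [← Summable.tsum_add hb ha]
    congr 1
    funext n
    rw [hf]
    ring
  have hfs : Summable f := by
    refine (hb.add ha).congr fun n => ?_
    rw [hf]; ring
  have he : Summable (fun k : ℕ => f (2 * k)) := hfs.comp_injective fun a b h => by omega
  have ho : Summable (fun k : ℕ => f (2 * k + 1)) := hfs.comp_injective fun a b h => by omega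
  have hsplit : (∑' k : ℕ, f (2 * k)) + (∑' k : ℕ, f (2 * k + 1)) = ∑' n : ℕ, f n :=
    tsum_even_add_odd he ho
  have hodd : (∑' k : ℕ, f (2 * k + 1)) = 0 := by
    convert tsum_zero with k
    have h1 : ((-1 : ℂ)) ^ (2 * k + 1) = -1 := by
      rw [pow_succ, pow_mul, neg_one_sq, one_pow, one_mul]
    show ((-1 : ℂ) ^ (2 * k + 1) + 1) * (q ^ (2 * k + 1 + 1) * qPoch q (2 * k + 1)) = 0
    rw [h1]; ring
  have heven : (∑' k : ℕ, f (2 * k)) = 2 * ∑' n : ℕ, q ^ (2 * n + 1) * qPoch q (2 * n) := by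
    rw [← tsum_mul_left]
    congr 1
    funext k
    have h1 : ((-1 : ℂ)) ^ (2 * k) = 1 := by
      rw [pow_mul, neg_one_sq, one_pow]
    show ((-1 : ℂ) ^ (2 * k) + 1) * (q ^ (2 * k + 1) * qPoch q (2 * k))
      = 2 * (q ^ (2 * k + 1) * qPoch q (2 * k))
    rw [h1]; ring
  calc (1 + ∑' n : ℕ, (-1 : ℂ) ^ n * q ^ (n + 1) * qPoch q n)
      - (1 - ∑' n : ℕ, q ^ (n + 1) * qPoch q n)
      = (∑' n : ℕ, (-1 : ℂ) ^ n * q ^ (n + 1) * qPoch q n)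
        + (∑' n : ℕ, q ^ (n + 1) * qPoch q n) := by ring
    _ = ∑' n : ℕ, f n := hsum
    _ = (∑' k : ℕ, f (2 * k)) + (∑' k : ℕ, f (2 * k + 1)) := hsplit.symm
    _ = 2 * ∑' n : ℕ, q ^ (2 * n + 1) * qPoch q (2 * n) := by rw [hodd, heven, add_zero]
end

section
/- For complex $q$ with $0<|q|<1$, the limit of the even partial sums $\sum_{n=0}^{2N-1}\frac{(-1)^n}{(-q;q)_n}$ exists and equals $\sum_{n=0}^\infty \frac{q^{2n+1}}{(-q;q)_{2n+1}}$. -/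
open Filter Topology

/-- The q-Pochhammer symbol `(-q;q)_n = ∏_{j=1}^n (1 + q^j)`. -/
noncomputable def negPoch (q : ℂ) (n : ℕ) : ℂ := ∏ j ∈ Finset.range n, (1 + q ^ (j + 1))

lemma one_add_pow_ne_zero {q : ℂ} (hq : ‖q‖ < 1) (j : ℕ) : (1 : ℂ) + q ^ (j + 1) ≠ 0 := by
  intro h
  have hx : q ^ (j + 1) = -1 := by linear_combination h
  have : ‖q ^ (j + 1)‖ < 1 := by
    rw [norm_pow]
    exact pow_lt_one₀ (norm_nonneg q) hq (Nat.succ_ne_zero j)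
  rw [hx] at this
  simp at this

lemma negPoch_ne_zero {q : ℂ} (hq : ‖q‖ < 1) (n : ℕ) : negPoch q n ≠ 0 := by
  unfold negPoch
  rw [Finset.prod_ne_zero_iff]
  exact fun j _ => one_add_pow_ne_zero hq j

lemma negPoch_succ (q : ℂ) (n : ℕ) :
    negPoch q (n + 1) = negPoch q n * (1 + q ^ (n + 1)) := by
  unfold negPoch
  exact Finset.prod_range_succ _ n

lemma telescoping {q : ℂ} (hq : ‖q‖ < 1) (N : ℕ) :
    ∑ n ∈ Finset.range (2 * N), (-1 : ℂ) ^ n / negPoch q n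
      = ∑ n ∈ Finset.range N, q ^ (2 * n + 1) / negPoch q (2 * n + 1) := by
  induction N with
  | zero => simp
  | succ N ih =>
    have h2 : 2 * (N + 1) = (2 * N + 1) + 1 := by ring
    rw [h2, Finset.sum_range_succ, Finset.sum_range_succ, Finset.sum_range_succ, ih]
    have hP := negPoch_ne_zero hq (2 * N)
    have hP1 := negPoch_ne_zero hq (2 * N + 1)
    have hrec : negPoch q (2 * N + 1) = negPoch q (2 * N) * (1 + q ^ (2 * N + 1)) :=
      negPoch_succ q (2 * N)
    have hpow : (-1 : ℂ) ^ (2 * N) = 1 := by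
      rw [pow_mul]; norm_num
    have hpow1 : (-1 : ℂ) ^ (2 * N + 1) = -1 := by
      rw [pow_succ, hpow]; ring
    rw [hpow, hpow1]
    have hne := one_add_pow_ne_zero hq (2 * N)
    have key : 1 / negPoch q (2 * N) + -1 / negPoch q (2 * N + 1)
        = q ^ (2 * N + 1) / negPoch q (2 * N + 1) := by
      rw [hrec]
      field_simp
      ring
    rw [add_assoc, key]

theorem strangePhi_even_partial_sums (q : ℂ) (hq0 : q ≠ 0) (hq : ‖q‖ < 1) :
    Summable (fun n : ℕ => q ^ (2 * n + 1) / negPoch q (2 * n + 1)) ∧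
    Tendsto (fun N : ℕ => ∑ n ∈ Finset.range (2 * N), (-1 : ℂ) ^ n / negPoch q n)
      atTop (𝓝 (∑' n : ℕ, q ^ (2 * n + 1) / negPoch q (2 * n + 1))) := by
  have hsum : Summable (fun n : ℕ => q ^ (2 * n + 1) / negPoch q (2 * n + 1)) := by
    apply summable_of_ratio_test_tendsto_lt_one (l := ‖q‖ ^ 2)
    · exact pow_lt_one₀ (norm_nonneg q) hq two_ne_zero
    · filter_upwards with n
      exact div_ne_zero (pow_ne_zero _ hq0) (negPoch_ne_zero hq _)
    · have key : ∀ n : ℕ,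
          ‖q ^ (2 * (n + 1) + 1) / negPoch q (2 * (n + 1) + 1)‖ /
            ‖q ^ (2 * n + 1) / negPoch q (2 * n + 1)‖
          = ‖q ^ 2 / ((1 + q ^ (2 * n + 2)) * (1 + q ^ (2 * n + 3)))‖ := by
        intro n
        have h1 : 2 * (n + 1) + 1 = (2 * n + 2) + 1 := by ring
        have h2 : 2 * n + 2 = (2 * n + 1) + 1 := by ring
        rw [← norm_div]
        congr 1
        have hP := negPoch_ne_zero hq (2 * n + 1)
        have e1 : negPoch q (2 * (n + 1) + 1)
            = negPoch q (2 * n + 1) * (1 + q ^ (2 * n + 2)) * (1 + q ^ (2 * n + 3)) := by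
          rw [h1, negPoch_succ, h2, negPoch_succ]
        rw [e1]
        have hne2 := one_add_pow_ne_zero hq (2 * n + 1)
        have hne3 := one_add_pow_ne_zero hq (2 * n + 2)
        have h2' : 2 * n + 1 + 1 = 2 * n + 2 := by ring
        have h3' : 2 * n + 2 + 1 = 2 * n + 3 := by ring
        rw [h2'] at hne2; rw [h3'] at hne3
        field_simp
        rw [show 2 * (n + 1) + 1 = 2 + (2 * n + 1) from by ring, pow_add]
        ring
      simp_rw [key]
      have h1 : Tendsto (fun n : ℕ => q ^ 2 / ((1 + q ^ (2 * n + 2)) * (1 + q ^ (2 * n + 3))))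
          atTop (𝓝 (q ^ 2)) := by
        have hpow : ∀ (c : ℕ), Tendsto (fun n : ℕ => q ^ (2 * n + c)) atTop (𝓝 0) := by
          intro c
          have : Tendsto (fun n : ℕ => q ^ n) atTop (𝓝 0) :=
            tendsto_pow_atTop_nhds_zero_of_norm_lt_one hq
          have hcomp : Tendsto (fun n : ℕ => 2 * n + c) atTop atTop := by
            apply tendsto_atTop_atTop_of_monotone
            · intro a b hab; dsimp only; omega
            · intro b; exact ⟨b, by omega⟩
          exact this.comp hcomp
        have h2 : Tendsto (fun n : ℕ => (1 + q ^ (2 * n + 2)) * (1 + q ^ (2 * n + 3)))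
            atTop (𝓝 1) := by
          have := ((tendsto_const_nhds (x := (1:ℂ))).add (hpow 2)).mul
            ((tendsto_const_nhds (x := (1:ℂ))).add (hpow 3))
          simpa using this
        have := (tendsto_const_nhds (x := q ^ 2)).div h2 one_ne_zero
        rw [div_one] at this
        exact this
      have := h1.norm
      simpa [norm_pow] using this
  refine ⟨hsum, ?_⟩
  have hts := hsum.hasSum.tendsto_sum_nat
  convert hts using 2 with N
  exact telescoping hq N
end

section
/- For complex $q$ with $0<|q|<1$, Ramanujan's mock theta function $f(q) = 1 - \sum_{n=1}^\infty \frac{(-1)^n q^n}{(-q;q)_n}$ satisfies $f(q) - \frac{1}{(-q;q)_\infty} = 2\sum_{n=0}^\infty \frac{q^{2n+1}}{(-q;q)_{2n+1}}$. -/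
open Filter Topology

theorem mock_f_minus_reciprocal_product (q : ℂ) (hq0 : q ≠ 0) (hq : ‖q‖ < 1) :
    (1 - ∑' n : ℕ, (-1 : ℂ) ^ (n + 1) * q ^ (n + 1) / negPoch q (n + 1))
      - 1 / (∏' j : ℕ, (1 + q ^ (j + 1)))
      = 2 * ∑' n : ℕ, q ^ (2 * n + 1) / negPoch q (2 * n + 1) := by
  have hq' : (0 : ℝ) ≤ ‖q‖ := norm_nonneg q
  have hqn : ∀ j : ℕ, ‖q ^ (j + 1)‖ < 1 := by
    intro j
    rw [norm_pow]
    exact pow_lt_one₀ hq' hq (Nat.succ_ne_zero j)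
  have hfac : ∀ j : ℕ, (1 : ℂ) + q ^ (j + 1) ≠ 0 := by
    intro j h
    have h2 := hqn j
    have : q ^ (j + 1) = -1 := by linear_combination h
    rw [this] at h2
    simp at h2
  have hPne : ∀ n, negPoch q n ≠ 0 := by
    intro n
    unfold negPoch
    refine Finset.prod_ne_zero_iff.mpr ?_
    intro j _
    exact hfac j
  -- summability of logs
  obtain ⟨N₀, hN₀⟩ : ∃ n : ℕ, ‖q‖ ^ n < 1 / 2 :=
    exists_pow_lt_of_lt_one (by norm_num) hq
  have hgeom : Summable (fun n : ℕ => ‖q‖ ^ n) := summable_geometric_of_lt_one hq' hq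
  have hqpow_le : ∀ j : ℕ, j ≥ N₀ → ‖q ^ (j + 1)‖ ≤ 1 / 2 := by
    intro j hj
    rw [norm_pow]
    calc ‖q‖ ^ (j + 1) ≤ ‖q‖ ^ N₀ := pow_le_pow_of_le_one hq' hq.le (by omega)
      _ ≤ 1 / 2 := hN₀.le
  have hlogsum : Summable (fun j : ℕ => Complex.log (1 + q ^ (j + 1))) := by
    refine Summable.of_norm_bounded_eventually_nat
      (g := fun j => (3 / 2 * ‖q‖) * ‖q‖ ^ j) (hgeom.mul_left _) ?_
    filter_upwards [eventually_ge_atTop N₀] with j hj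
    calc ‖Complex.log (1 + q ^ (j + 1))‖ ≤ 3 / 2 * ‖q ^ (j + 1)‖ :=
          Complex.norm_log_one_add_half_le_self (hqpow_le j hj)
      _ = (3 / 2 * ‖q‖) * ‖q‖ ^ j := by rw [norm_pow, pow_succ]; ring
  -- the infinite product
  set PP : ℂ := Complex.exp (∑' j : ℕ, Complex.log (1 + q ^ (j + 1))) with hPPdef
  have hPPne : PP ≠ 0 := Complex.exp_ne_zero _
  have hProd : HasProd (fun j : ℕ => 1 + q ^ (j + 1)) PP := by
    refine HasProd.congr_fun hlogsum.hasSum.cexp fun j => ?_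
    exact (Complex.exp_log (hfac j)).symm
  have htprod : (∏' j : ℕ, (1 + q ^ (j + 1))) = PP := hProd.tprod_eq
  have htend : Tendsto (fun n => negPoch q n) atTop (𝓝 PP) := hProd.tendsto_prod_nat
  have hinv : Tendsto (fun n => (negPoch q n)⁻¹) atTop (𝓝 PP⁻¹) := htend.inv₀ hPPne
  have hPPpos : (0 : ℝ) < ‖PP‖ := norm_pos_iff.mpr hPPne
  -- eventual lower bound on ‖negPoch q n‖
  have hev : ∀ᶠ n in atTop, ‖PP‖ / 2 ≤ ‖negPoch q n‖ :=
    htend.norm.eventually (eventually_ge_nhds (by linarith))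
  obtain ⟨N₁, hN₁⟩ := eventually_atTop.mp hev
  -- summability of the norms of the main terms
  have hgs : Summable (fun n : ℕ => ‖q ^ (n + 1) / negPoch q (n + 1)‖) := by
    refine Summable.of_norm_bounded_eventually_nat
      (g := fun n => (2 / ‖PP‖ * ‖q‖) * ‖q‖ ^ n) (hgeom.mul_left _) ?_
    filter_upwards [eventually_ge_atTop N₁] with n hn
    have hP : ‖PP‖ / 2 ≤ ‖negPoch q (n + 1)‖ := hN₁ (n + 1) (by omega)
    rw [norm_norm, norm_div, norm_pow]
    have hPpos : (0 : ℝ) < ‖negPoch q (n + 1)‖ := norm_pos_iff.mpr (hPne (n + 1))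
    rw [div_le_iff₀ hPpos]
    have hPP' : ‖PP‖ ≠ 0 := hPPpos.ne'
    have hPP2 : ‖PP‖ ≠ 0 := by simpa using hPP'
    calc ‖q‖ ^ (n + 1) = (2 / ‖PP‖ * ‖q‖) * ‖q‖ ^ n * (‖PP‖ / 2) := by
          rw [pow_succ]
          field_simp
      _ ≤ (2 / ‖PP‖ * ‖q‖) * ‖q‖ ^ n * ‖negPoch q (n + 1)‖ := by
          have hnn : (0 : ℝ) ≤ 2 / ‖PP‖ * ‖q‖ * ‖q‖ ^ n := by positivity
          exact mul_le_mul_of_nonneg_left hP hnn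
  have hg : Summable (fun n : ℕ => q ^ (n + 1) / negPoch q (n + 1)) :=
    Summable.of_norm hgs
  have ha : Summable (fun n : ℕ => (-1 : ℂ) ^ (n + 1) * q ^ (n + 1) / negPoch q (n + 1)) := by
    refine Summable.of_norm (hgs.congr fun n => ?_)
    simp [norm_div, norm_mul, norm_pow]
  -- telescoping identity
  have hkey : ∀ n : ℕ, q ^ (n + 1) / negPoch q (n + 1)
      = (negPoch q n)⁻¹ - (negPoch q (n + 1))⁻¹ := by
    intro n
    have hrec : negPoch q (n + 1) = negPoch q n * (1 + q ^ (n + 1)) :=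
      Finset.prod_range_succ _ n
    field_simp [hPne n, hPne (n + 1)]
    rw [hrec]
    ring
  have htsum_g : (∑' n : ℕ, q ^ (n + 1) / negPoch q (n + 1)) = 1 - PP⁻¹ := by
    have h1 : Tendsto (fun n => ∑ i ∈ Finset.range n, q ^ (i + 1) / negPoch q (i + 1))
        atTop (𝓝 (1 - PP⁻¹)) := by
      have heq : (fun n => ∑ i ∈ Finset.range n, q ^ (i + 1) / negPoch q (i + 1))
          = fun n => 1 - (negPoch q n)⁻¹ := by
        funext n
        calc ∑ i ∈ Finset.range n, q ^ (i + 1) / negPoch q (i + 1)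
            = ∑ i ∈ Finset.range n, ((negPoch q i)⁻¹ - (negPoch q (i + 1))⁻¹) := by
              exact Finset.sum_congr rfl fun i _ => hkey i
          _ = (negPoch q 0)⁻¹ - (negPoch q n)⁻¹ := Finset.sum_range_sub' _ n
          _ = 1 - (negPoch q n)⁻¹ := by
              simp [negPoch]
      rw [heq]
      exact tendsto_const_nhds.sub hinv
    exact tendsto_nhds_unique hg.hasSum.tendsto_sum_nat h1
  -- the difference series
  set h : ℕ → ℂ := fun n =>
    q ^ (n + 1) / negPoch q (n + 1) - (-1 : ℂ) ^ (n + 1) * q ^ (n + 1) / negPoch q (n + 1)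
    with hhdef
  have hh : Summable h := hg.sub ha
  have htsum_h : (∑' n, h n)
      = (1 - PP⁻¹) - ∑' n : ℕ, (-1 : ℂ) ^ (n + 1) * q ^ (n + 1) / negPoch q (n + 1) := by
    rw [hhdef, Summable.tsum_sub hg ha, htsum_g]
  -- even/odd split of h
  have hhe : (fun k : ℕ => h (2 * k)) = fun k => 2 * (q ^ (2 * k + 1) / negPoch q (2 * k + 1)) := by
    funext k
    have hodd : ((-1 : ℂ)) ^ (2 * k + 1) = -1 := Odd.neg_one_pow ⟨k, by ring⟩
    simp only [hhdef, hodd]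
    ring
  have hho : (fun k : ℕ => h (2 * k + 1)) = fun _ => (0 : ℂ) := by
    funext k
    have heven : ((-1 : ℂ)) ^ (2 * k + 1 + 1) = 1 := Even.neg_one_pow ⟨k + 1, by ring⟩
    simp only [hhdef, heven]
    ring
  have hinj : Function.Injective (fun k : ℕ => 2 * k) :=
    mul_right_injective₀ (two_ne_zero)
  have hhe_s : Summable (fun k : ℕ => h (2 * k)) := hh.comp_injective hinj
  have hho_s : Summable (fun k : ℕ => h (2 * k + 1)) := by
    rw [hho]; exact summable_zero
  have hsplit := tsum_even_add_odd hhe_s hho_s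
  have htsum_h2 : (∑' n, h n) = 2 * ∑' n : ℕ, q ^ (2 * n + 1) / negPoch q (2 * n + 1) := by
    rw [← hsplit, hho, hhe, tsum_zero, add_zero, tsum_mul_left]
  rw [htprod, one_div]
  linear_combination htsum_h2 - htsum_h
end

section
/- For complex $q$ with $0<|q|<1$, the Cesàro sum of the divergent series $\widetilde{\phi}(q)=\sum_{n\geq 0}\frac{(-1)^n}{(-q;q)_n}$ exists and equals $\frac{1}{2}f(q)$, where $f(q) = 1 - \sum_{n=1}^\infty \frac{(-1)^n q^n}{(-q;q)_n}$. -/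
open Filter Topology

lemma negPoch_lb (q : ℂ) (hq0 : q ≠ 0) (hq : ‖q‖ < 1) (n : ℕ) :
    Real.exp (Real.log (1 - ‖q‖) / (1 - ‖q‖)) ≤ ‖negPoch q n‖ := by
  set r : ℝ := ‖q‖ with hr
  have hr0 : 0 < r := norm_pos_iff.mpr hq0
  have hr1 : (0:ℝ) < 1 - r := by linarith
  have hfac : ∀ j : ℕ, Real.exp (r ^ j * Real.log (1 - r)) ≤ ‖1 + q ^ (j+1)‖ := by
    intro j
    have h1 : ‖(1:ℂ)‖ - ‖q ^ (j+1)‖ ≤ ‖1 + q ^ (j+1)‖ := by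
      have := norm_sub_norm_le (1 : ℂ) (-(q ^ (j+1)))
      simpa [sub_neg_eq_add] using this
    have h2 : ‖q ^ (j+1)‖ = r ^ (j+1) := by rw [norm_pow]
    have hrj : r ^ j ≤ 1 := pow_le_one₀ hr0.le hq.le
    have hrj0 : 0 ≤ r ^ j := pow_nonneg hr0.le _
    have hconv := convexOn_exp.2 (Set.mem_univ (0:ℝ)) (Set.mem_univ (Real.log (1 - r)))
        (show (0:ℝ) ≤ 1 - r ^ j by linarith) hrj0 (by ring)
    rw [Real.exp_log hr1] at hconv
    simp only [smul_eq_mul, mul_zero, zero_add, Real.exp_zero, mul_one] at hconv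
    have : r ^ j * (1 - r) = r ^ j - r ^ (j+1) := by ring
    calc Real.exp (r ^ j * Real.log (1 - r)) ≤ (1 - r ^ j) + r ^ j * (1 - r) := hconv
      _ = 1 - r ^ (j+1) := by ring
      _ ≤ ‖1 + q ^ (j+1)‖ := by rw [← h2]; simpa using h1
  have hlog : Real.log (1 - r) ≤ 0 := Real.log_nonpos (by linarith) (by linarith)
  calc Real.exp (Real.log (1 - r) / (1 - r))
      ≤ Real.exp (∑ j ∈ Finset.range n, r ^ j * Real.log (1 - r)) := by
        apply Real.exp_le_exp.mpr
        rw [← Finset.sum_mul, div_eq_mul_inv, mul_comm]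
        have hsum : ∑ j ∈ Finset.range n, r ^ j ≤ (1 - r)⁻¹ := by
          rw [← tsum_geometric_of_lt_one hr0.le hq]
          exact Summable.sum_le_tsum _ (fun i _ => pow_nonneg hr0.le _)
            (summable_geometric_of_lt_one hr0.le hq)
        exact mul_le_mul_of_nonpos_right hsum hlog
    _ = ∏ j ∈ Finset.range n, Real.exp (r ^ j * Real.log (1 - r)) := (Real.exp_sum _ _)
    _ ≤ ‖negPoch q n‖ := by
        rw [negPoch, norm_prod]
        exact Finset.prod_le_prod (fun j _ => (Real.exp_pos _).le) (fun j _ => hfac j)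

lemma negPoch_ne (q : ℂ) (hq0 : q ≠ 0) (hq : ‖q‖ < 1) (n : ℕ) : negPoch q n ≠ 0 := by
  have h := negPoch_lb q hq0 hq n
  have : (0:ℝ) < ‖negPoch q n‖ := lt_of_lt_of_le (Real.exp_pos _) h
  exact norm_pos_iff.mp this

theorem cesaro_strangePhi (q : ℂ) (hq0 : q ≠ 0) (hq : ‖q‖ < 1) :
    Tendsto (fun N : ℕ =>
        (∑ k ∈ Finset.range N, ∑ n ∈ Finset.range (k + 1), (-1 : ℂ) ^ n / negPoch q n) / N)
      atTop
      (𝓝 ((1 - ∑' n : ℕ, (-1 : ℂ) ^ (n + 1) * q ^ (n + 1) / negPoch q (n + 1)) / 2)) := by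
  set r : ℝ := ‖q‖ with hr
  have hr0 : 0 < r := norm_pos_iff.mpr hq0
  set δ : ℝ := Real.exp (Real.log (1 - r) / (1 - r)) with hδ
  have hδ0 : 0 < δ := Real.exp_pos _
  have hlb : ∀ n, δ ≤ ‖negPoch q n‖ := negPoch_lb q hq0 hq
  have hPne : ∀ n, negPoch q n ≠ 0 := negPoch_ne q hq0 hq
  set w : ℕ → ℂ := fun n => (-1 : ℂ) ^ n * q ^ (n + 1) / negPoch q (n + 1) with hw
  have hwb : ∀ n, ‖w n‖ ≤ δ⁻¹ * r * r ^ n := by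
    intro n
    have h1 : ‖w n‖ = r ^ (n+1) / ‖negPoch q (n+1)‖ := by
      rw [hw]
      simp only [norm_div, norm_mul, norm_pow, norm_neg, norm_one, one_pow, one_mul, ← hr]
    rw [h1]
    have h2 : r ^ (n+1) / ‖negPoch q (n+1)‖ ≤ r ^ (n+1) / δ := by
      gcongr
      exact hlb _
    calc r ^ (n+1) / ‖negPoch q (n+1)‖ ≤ r ^ (n+1) / δ := h2
      _ = δ⁻¹ * r * r ^ n := by rw [pow_succ]; field_simp
  have hgs : Summable (fun n => ‖w n‖) := by
    apply Summable.of_nonneg_of_le (fun n => norm_nonneg _) hwb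
    exact ((summable_geometric_of_lt_one hr0.le hq).mul_left _)
  have hws : Summable w := hgs.of_norm
  set T : ℂ := ∑' n, w n with hT
  set Kw : ℝ := ∑' n, ‖w n‖ with hKw
  have hK0 : 0 ≤ Kw := tsum_nonneg (fun n => norm_nonneg _)
  set a : ℕ → ℂ := fun n => (-1 : ℂ) ^ n / negPoch q n with ha
  set S : ℕ → ℂ := fun k => ∑ n ∈ Finset.range (k + 1), a n with hS
  have haw : ∀ n, a n + a (n + 1) = w n := by
    intro n
    have hstep : negPoch q (n + 1) = negPoch q n * (1 + q ^ (n + 1)) :=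
      Finset.prod_range_succ _ _
    have h1 : (1 : ℂ) + q ^ (n + 1) ≠ 0 := by
      intro h
      apply hPne (n + 1)
      rw [hstep, h, mul_zero]
    have hP := hPne n
    simp only [ha, hw]
    rw [hstep]
    field_simp
    ring
  have hS0 : S 0 = 1 := by simp [hS, ha, negPoch]
  have hSU : ∀ k, S k + S (k + 1) = 1 + ∑ n ∈ Finset.range (k + 1), w n := by
    intro k
    induction k with
    | zero =>
      have h1 : S 1 = S 0 + a 1 := Finset.sum_range_succ _ _
      have h2 : a 0 = 1 := by simp [ha, negPoch]
      rw [Finset.sum_range_one, h1, hS0]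
      linear_combination haw 0 - h2
    | succ k ih =>
      have h1 : S (k + 2) = S (k + 1) + a (k + 2) := Finset.sum_range_succ _ _
      have h2 : S (k + 1) = S k + a (k + 1) := Finset.sum_range_succ _ _
      have h3 : ∑ n ∈ Finset.range (k + 2), w n
          = (∑ n ∈ Finset.range (k + 1), w n) + w (k + 1) := Finset.sum_range_succ _ _
      rw [h1, h3]
      linear_combination ih + haw (k + 1) + h2
  have hSE : ∀ m, S (2 * m) = 1 + ∑ j ∈ Finset.range m, w (2 * j + 1) := by
    intro m
    induction m with
    | zero => simpa using hS0
    | succ m ih =>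
      have e1 : 2 * (m + 1) = (2 * m + 1) + 1 := by ring
      have h1 : S ((2 * m + 1) + 1) = S (2 * m + 1) + a (2 * m + 2) := Finset.sum_range_succ _ _
      have h2 : S (2 * m + 1) = S (2 * m) + a (2 * m + 1) := Finset.sum_range_succ _ _
      have h3 : ∑ j ∈ Finset.range (m + 1), w (2 * j + 1)
          = (∑ j ∈ Finset.range m, w (2 * j + 1)) + w (2 * m + 1) := Finset.sum_range_succ _ _
      rw [e1, h1, h2, h3]
      have h4 := haw (2 * m + 1)
      have e2 : 2 * m + 1 + 1 = 2 * m + 2 := by ring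
      rw [e2] at h4
      linear_combination ih + h4
  -- uniform bound on S
  have hsum_norm : ∀ m, ∑ n ∈ Finset.range m, ‖w n‖ ≤ Kw := by
    intro m
    exact Summable.sum_le_tsum _ (fun i _ => norm_nonneg _) hgs
  have hsum_odd : ∀ m, ∑ j ∈ Finset.range m, ‖w (2 * j + 1)‖ ≤ Kw := by
    intro m
    have hinj : ∀ x ∈ Finset.range m, ∀ y ∈ Finset.range m,
        2 * x + 1 = 2 * y + 1 → x = y := by intros x _ y _ h; omega
    calc ∑ j ∈ Finset.range m, ‖w (2 * j + 1)‖
        = ∑ i ∈ (Finset.range m).image (fun j => 2 * j + 1), ‖w i‖ :=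
          (Finset.sum_image (f := fun i => ‖w i‖) hinj).symm
      _ ≤ Kw := Summable.sum_le_tsum _ (fun i _ => norm_nonneg _) hgs
  have hSEb : ∀ m, ‖S (2 * m)‖ ≤ 1 + Kw := by
    intro m
    rw [hSE m]
    calc ‖(1:ℂ) + ∑ j ∈ Finset.range m, w (2 * j + 1)‖
        ≤ ‖(1:ℂ)‖ + ‖∑ j ∈ Finset.range m, w (2 * j + 1)‖ := norm_add_le _ _
      _ ≤ 1 + ∑ j ∈ Finset.range m, ‖w (2 * j + 1)‖ := by
          rw [norm_one]; gcongr; exact norm_sum_le _ _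
      _ ≤ 1 + Kw := by linarith [hsum_odd m]
  have hSb : ∀ N, ‖S N‖ ≤ 3 + 2 * Kw := by
    intro N
    rcases Nat.even_or_odd N with ⟨m, hm⟩ | ⟨m, hm⟩
    · have : N = 2 * m := by omega
      rw [this]
      linarith [hSEb m]
    · rw [hm]
      have h1 := hSU (2 * m)
      have h2 : S (2 * m + 1) = (1 + ∑ n ∈ Finset.range (2 * m + 1), w n) - S (2 * m) := by
        linear_combination h1
      rw [h2]
      calc ‖(1 + ∑ n ∈ Finset.range (2 * m + 1), w n) - S (2 * m)‖
          ≤ ‖(1:ℂ) + ∑ n ∈ Finset.range (2 * m + 1), w n‖ + ‖S (2 * m)‖ := norm_sub_le _ _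
        _ ≤ (1 + ∑ n ∈ Finset.range (2 * m + 1), ‖w n‖) + (1 + Kw) := by
            gcongr
            · calc ‖(1:ℂ) + ∑ n ∈ Finset.range (2 * m + 1), w n‖
                  ≤ ‖(1:ℂ)‖ + ‖∑ n ∈ Finset.range (2 * m + 1), w n‖ := norm_add_le _ _
                _ ≤ 1 + ∑ n ∈ Finset.range (2 * m + 1), ‖w n‖ := by
                    rw [norm_one]; gcongr; exact norm_sum_le _ _
            · exact hSEb m
        _ ≤ 3 + 2 * Kw := by linarith [hsum_norm (2 * m + 1)]
  -- key identity
  have hkey : ∀ N, 2 * (∑ k ∈ Finset.range N, S k)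
      = (∑ k ∈ Finset.range N, (1 + ∑ n ∈ Finset.range (k + 1), w n)) + 1 - S N := by
    intro N
    induction N with
    | zero => simp [hS0]
    | succ N ih =>
      rw [Finset.sum_range_succ, Finset.sum_range_succ (f := fun k => (1:ℂ) + ∑ n ∈ Finset.range (k + 1), w n)]
      linear_combination ih + hSU N
  -- limits
  have hUlim : Tendsto (fun k : ℕ => (1:ℂ) + ∑ n ∈ Finset.range (k + 1), w n) atTop
      (𝓝 (1 + T)) := by
    apply tendsto_const_nhds.add
    exact hws.hasSum.tendsto_sum_nat.comp (tendsto_add_atTop_nat 1)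
  have hC : Tendsto (fun N : ℕ =>
      (∑ k ∈ Finset.range N, ((1:ℂ) + ∑ n ∈ Finset.range (k + 1), w n)) / N) atTop
      (𝓝 (1 + T)) := by
    have := hUlim.cesaro_smul
    apply this.congr
    intro N
    rw [Complex.real_smul, Complex.ofReal_inv, Complex.ofReal_natCast, inv_mul_eq_div]
  have hSlim : Tendsto (fun N : ℕ => ((1:ℂ) - S N) / N) atTop (𝓝 0) := by
    apply squeeze_zero_norm (a := fun N : ℕ => (4 + 2 * Kw) / N)
    · intro N
      rcases Nat.eq_zero_or_pos N with h | h
      · simp [h]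
      · have hN : (0:ℝ) < N := by exact_mod_cast h
        rw [norm_div, Complex.norm_natCast]
        have hb : ‖(1:ℂ) - S N‖ ≤ 4 + 2 * Kw := by
          calc ‖(1:ℂ) - S N‖ ≤ ‖(1:ℂ)‖ + ‖S N‖ := norm_sub_le _ _
            _ ≤ 4 + 2 * Kw := by rw [norm_one]; linarith [hSb N]
        gcongr
    · exact tendsto_const_div_atTop_nhds_zero_nat _
  have hT2 : ∑' n : ℕ, (-1 : ℂ) ^ (n + 1) * q ^ (n + 1) / negPoch q (n + 1) = -T := by
    rw [hT, ← tsum_neg]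
    congr 1
    funext n
    rw [hw]
    ring
  rw [hT2]
  have hgoal_lim : ((1 : ℂ) - -T) / 2 = ((1 + T) + 0) / 2 := by ring
  rw [hgoal_lim]
  have h := (hC.add hSlim).div_const 2
  apply h.congr
  intro N
  have hFS : ∑ k ∈ Finset.range N, ∑ n ∈ Finset.range (k + 1), (-1 : ℂ) ^ n / negPoch q n
      = ∑ k ∈ Finset.range N, S k := by
    simp [hS, ha]
  have hF : ∑ k ∈ Finset.range N, S k
      = ((∑ k ∈ Finset.range N, ((1:ℂ) + ∑ n ∈ Finset.range (k + 1), w n)) + (1 - S N)) / 2 := by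
    linear_combination (hkey N) / 2
  rw [hFS, hF]
  ring
end

section
/- For complex $q$ with $0<|q|<1$ and parameters $a_1,\ldots,a_r,b_1,\ldots,b_s$ with $(b_jq;q)_n\neq 0$ always, the Cesàro sum of the generalized strange series $\widetilde{\Phi}(a_1,\ldots,a_r;b_1,\ldots,b_s;q) = \sum_{n\geq 0}(-1)^n\frac{(a_1q,\ldots,a_rq;q)_n}{(b_1q,\ldots,b_sq;q)_n}$ exists and equals $\frac{1}{2}\left(1 - \sum_{n=1}^\infty \frac{(-1)^n q^n(\alpha_r(q^n)-\beta_s(q^n))(a_1q,\ldots,a_rq;q)_{n-1}}{(b_1q,\ldots,b_sq;q)_n}\right)$. -/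
open Filter Topology

/-- `(a₁q,…,a_rq;q)_n = ∏_i ∏_{k=0}^{n-1} (1 - aᵢ q^{k+1})`. -/
noncomputable def genPoch {r : ℕ} (a : Fin r → ℂ) (q : ℂ) (n : ℕ) : ℂ :=
  ∏ i : Fin r, ∏ k ∈ Finset.range n, (1 - a i * q ^ (k + 1))

/-- `(a₁q,…,a_rq;q)_∞` as an infinite product over the factor index. -/
noncomputable def genPochInf {r : ℕ} (a : Fin r → ℂ) (q : ℂ) : ℂ :=
  ∏' k : ℕ, ∏ i : Fin r, (1 - a i * q ^ (k + 1))


lemma aux_norm_prod_le {ι : Type*} (s : Finset ι) (f : ι → ℂ) :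
    ‖∏ i ∈ s, (1 - f i)‖ ≤ ∏ i ∈ s, (1 + ‖f i‖) := by
  refine le_trans (Finset.norm_prod_le s (fun i => 1 - f i)) ?_
  refine Finset.prod_le_prod (fun i _ => norm_nonneg _) (fun i _ => ?_)
  calc ‖1 - f i‖ ≤ ‖(1:ℂ)‖ + ‖f i‖ := norm_sub_le _ _
    _ = 1 + ‖f i‖ := by rw [norm_one]

lemma aux_one_sub_sum_le {ι : Type*} (s : Finset ι) (f : ι → ℂ)
    (h : ∀ i ∈ s, ‖f i‖ ≤ 1) : 1 - ∑ i ∈ s, ‖f i‖ ≤ ‖∏ i ∈ s, (1 - f i)‖ := by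
  induction s using Finset.cons_induction with
  | empty => simp
  | cons j s hj ih =>
    rw [Finset.prod_cons, Finset.sum_cons]
    have h1 : ‖f j‖ ≤ 1 := h j (Finset.mem_cons_self _ _)
    have ih' := ih (fun i hi => h i (Finset.mem_cons_of_mem hi))
    have hs0 : (0:ℝ) ≤ ∑ i ∈ s, ‖f i‖ := Finset.sum_nonneg fun i _ => norm_nonneg _
    rcases le_or_gt (1 - ∑ i ∈ s, ‖f i‖) 0 with h0 | h0
    · have : 1 - (‖f j‖ + ∑ i ∈ s, ‖f i‖) ≤ 0 := by linarith [norm_nonneg (f j)]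
      exact this.trans (norm_nonneg _)
    · rw [norm_mul]
      have hnj : 1 - ‖f j‖ ≤ ‖1 - f j‖ := by
        have := norm_sub_norm_le (1:ℂ) (f j); simpa using this
      calc 1 - (‖f j‖ + ∑ i ∈ s, ‖f i‖)
          ≤ (1 - ‖f j‖) * (1 - ∑ i ∈ s, ‖f i‖) := by nlinarith [norm_nonneg (f j)]
        _ ≤ ‖1 - f j‖ * ‖∏ i ∈ s, (1 - f i)‖ :=
            mul_le_mul hnj ih' h0.le (norm_nonneg _)

lemma aux_prod_sub_one {ι : Type*} (s : Finset ι) (f : ι → ℂ) :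
    ‖(∏ i ∈ s, (1 - f i)) - 1‖ ≤ (∑ i ∈ s, ‖f i‖) * ∏ i ∈ s, (1 + ‖f i‖) := by
  induction s using Finset.cons_induction with
  | empty => simp
  | cons j s hj ih =>
    rw [Finset.prod_cons, Finset.sum_cons, Finset.prod_cons]
    have key : (1 - f j) * ∏ i ∈ s, (1 - f i) - 1
        = ((∏ i ∈ s, (1 - f i)) - 1) - f j * ∏ i ∈ s, (1 - f i) := by ring
    rw [key]
    have h2 := aux_norm_prod_le s f
    have h3 : (0:ℝ) ≤ ∑ i ∈ s, ‖f i‖ := Finset.sum_nonneg fun i _ => norm_nonneg _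
    have h5 : (0:ℝ) ≤ ∏ i ∈ s, (1 + ‖f i‖) :=
      Finset.prod_nonneg fun i _ => by positivity
    have h6 := norm_nonneg (f j)
    calc ‖((∏ i ∈ s, (1 - f i)) - 1) - f j * ∏ i ∈ s, (1 - f i)‖
        ≤ ‖(∏ i ∈ s, (1 - f i)) - 1‖ + ‖f j * ∏ i ∈ s, (1 - f i)‖ := norm_sub_le _ _
      _ ≤ (∑ i ∈ s, ‖f i‖) * ∏ i ∈ s, (1 + ‖f i‖) + ‖f j‖ * ∏ i ∈ s, (1 + ‖f i‖) := by
          rw [norm_mul]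
          exact add_le_add ih (by nlinarith [norm_nonneg (∏ i ∈ s, (1 - f i))])
      _ ≤ (‖f j‖ + ∑ i ∈ s, ‖f i‖) * ((1 + ‖f j‖) * ∏ i ∈ s, (1 + ‖f i‖)) := by
          nlinarith [mul_nonneg (mul_nonneg h6 h6) h5, mul_nonneg (mul_nonneg h6 h3) h5]

lemma aux_prod_le_exp {ι : Type*} (s : Finset ι) (u : ι → ℝ) (h : ∀ i ∈ s, 0 ≤ u i) :
    ∏ i ∈ s, (1 + u i) ≤ Real.exp (∑ i ∈ s, u i) := by
  rw [Real.exp_sum]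
  exact Finset.prod_le_prod (fun i hi => by linarith [h i hi])
    (fun i hi => by linarith [Real.add_one_le_exp (u i)])

lemma cesaro_complex {u : ℕ → ℂ} {l : ℂ} (h : Tendsto u atTop (𝓝 l)) :
    Tendsto (fun n : ℕ => (∑ i ∈ Finset.range n, u i) / n) atTop (𝓝 l) := by
  refine h.cesaro_smul.congr fun n => ?_
  rw [Complex.real_smul, div_eq_inv_mul]
  push_cast
  rfl

lemma genPoch_zero {r : ℕ} (a : Fin r → ℂ) (q : ℂ) : genPoch a q 0 = 1 := by
  simp [genPoch]

lemma genPoch_succ {r : ℕ} (a : Fin r → ℂ) (q : ℂ) (n : ℕ) :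
    genPoch a q (n + 1) = genPoch a q n * ∏ i : Fin r, (1 - a i * q ^ (n + 1)) := by
  simp [genPoch, Finset.prod_range_succ, Finset.prod_mul_distrib]

lemma genPoch_split {r : ℕ} (a : Fin r → ℂ) (q : ℂ) {N n : ℕ} (h : N ≤ n) :
    genPoch a q n = genPoch a q N *
      ∏ k ∈ Finset.Ico N n, ∏ i : Fin r, (1 - a i * q ^ (k + 1)) := by
  unfold genPoch
  calc (∏ i : Fin r, ∏ k ∈ Finset.range n, (1 - a i * q ^ (k + 1)))
      = ∏ i : Fin r, ((∏ k ∈ Finset.range N, (1 - a i * q ^ (k + 1))) *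
          ∏ k ∈ Finset.Ico N n, (1 - a i * q ^ (k + 1))) :=
        Finset.prod_congr rfl fun i _ => (Finset.prod_range_mul_prod_Ico _ h).symm
    _ = (∏ i : Fin r, ∏ k ∈ Finset.range N, (1 - a i * q ^ (k + 1))) *
          ∏ i : Fin r, ∏ k ∈ Finset.Ico N n, (1 - a i * q ^ (k + 1)) :=
        Finset.prod_mul_distrib
    _ = _ := by
        congr 1
        exact Finset.prod_comm

lemma genPoch_prod {r : ℕ} (a : Fin r → ℂ) (q : ℂ) (n : ℕ) :
    genPoch a q n = ∏ p ∈ (Finset.univ ×ˢ Finset.range n : Finset (Fin r × ℕ)),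
      (1 - a p.1 * q ^ (p.2 + 1)) := by
  rw [Finset.prod_product]; rfl

set_option maxHeartbeats 2000000 in
theorem generalized_strange_cesaro (r s : ℕ) (a : Fin r → ℂ) (b : Fin s → ℂ)
    (q : ℂ) (hq0 : q ≠ 0) (hq : ‖q‖ < 1)
    (hb : ∀ (j : Fin s) (n : ℕ), (∏ k ∈ Finset.range n, (1 - b j * q ^ (k + 1))) ≠ 0)
    (α β : ℂ → ℂ)
    (hα : ∀ x : ℂ, ∏ i : Fin r, (1 - a i * x) = 1 - α x * x)
    (hβ : ∀ x : ℂ, ∏ j : Fin s, (1 - b j * x) = 1 - β x * x) :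
    Tendsto (fun N : ℕ =>
        (∑ k ∈ Finset.range N, ∑ n ∈ Finset.range (k + 1),
          (-1 : ℂ) ^ n * (genPoch a q n / genPoch b q n)) / N)
      atTop
      (𝓝 ((1 - ∑' n : ℕ, (-1 : ℂ) ^ (n + 1) * q ^ (n + 1)
            * (α (q ^ (n + 1)) - β (q ^ (n + 1))) * genPoch a q n / genPoch b q (n + 1)) / 2)) := by
  set t : ℕ → ℂ := fun n => (-1 : ℂ) ^ n * (genPoch a q n / genPoch b q n) with ht_def
  set c : ℕ → ℂ := fun n => (-1 : ℂ) ^ (n + 1) * q ^ (n + 1)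
      * (α (q ^ (n + 1)) - β (q ^ (n + 1))) * genPoch a q n / genPoch b q (n + 1) with hc_def
  set S : ℕ → ℂ := fun k => ∑ n ∈ Finset.range (k + 1), t n with hS_def
  set C : ℂ := ∑' n, c n with hC_def
  -- basic nonvanishing
  have hq' : (0:ℝ) ≤ ‖q‖ := norm_nonneg q
  have hq1 : (0:ℝ) < 1 - ‖q‖ := by linarith
  have hfacb : ∀ (j : Fin s) (k : ℕ), 1 - b j * q ^ (k + 1) ≠ 0 := by
    intro j k h0
    exact hb j (k + 1) (Finset.prod_eq_zero (Finset.self_mem_range_succ k) h0)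
  have hBne : ∀ n, genPoch b q n ≠ 0 := by
    intro n
    exact Finset.prod_ne_zero_iff.2 fun j _ => hb j n
  have hPbne : ∀ n, (∏ j : Fin s, (1 - b j * q ^ (n + 1))) ≠ 0 := fun n =>
    Finset.prod_ne_zero_iff.2 fun j _ => hfacb j n
  have hsumq : Summable (fun k : ℕ => ‖q‖ ^ k) := summable_geometric_of_lt_one hq' hq
  have hgeo : ∀ n, ∑ k ∈ Finset.range n, ‖q‖ ^ (k+1) ≤ (1 - ‖q‖)⁻¹ := by
    intro n
    calc ∑ k ∈ Finset.range n, ‖q‖ ^ (k+1) ≤ ∑ k ∈ Finset.range n, ‖q‖ ^ k :=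
        Finset.sum_le_sum fun k _ => pow_le_pow_of_le_one hq' hq.le (Nat.le_succ k)
      _ ≤ ∑' k, ‖q‖ ^ k := Summable.sum_le_tsum _ (fun k _ => by positivity) hsumq
      _ = (1 - ‖q‖)⁻¹ := tsum_geometric_of_lt_one hq' hq
  have hgeoIco : ∀ N n : ℕ, ∑ k ∈ Finset.Ico N n, ‖q‖ ^ (k+1) ≤ ‖q‖^(N+1) * (1 - ‖q‖)⁻¹ := by
    intro N n
    rcases le_or_gt N n with h | h
    · rw [Finset.sum_Ico_eq_sum_range]
      calc ∑ k ∈ Finset.range (n - N), ‖q‖ ^ (N + k + 1)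
          = ∑ k ∈ Finset.range (n - N), ‖q‖ ^ (N+1) * ‖q‖ ^ k := by
            refine Finset.sum_congr rfl fun k _ => ?_
            rw [← pow_add]
            congr 1
            omega
        _ = ‖q‖^(N+1) * ∑ k ∈ Finset.range (n-N), ‖q‖ ^ k := by rw [Finset.mul_sum]
        _ ≤ ‖q‖^(N+1) * (1 - ‖q‖)⁻¹ := by
            refine mul_le_mul_of_nonneg_left ?_ (by positivity)
            exact le_trans (Summable.sum_le_tsum _ (fun k _ => by positivity) hsumq)
              (le_of_eq (tsum_geometric_of_lt_one hq' hq))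
    · rw [Finset.Ico_eq_empty (by omega)]
      simp only [Finset.sum_empty]
      positivity
  -- uniform lower bound on ‖genPoch b q n‖
  obtain ⟨δ, hδ0, hδ⟩ : ∃ δ : ℝ, 0 < δ ∧ ∀ n, δ ≤ ‖genPoch b q n‖ := by
    have hBs0 : (0:ℝ) ≤ ∑ j : Fin s, ‖b j‖ := Finset.sum_nonneg fun j _ => norm_nonneg _
    set Bs : ℝ := ∑ j : Fin s, ‖b j‖ with hBs
    have hpow : Tendsto (fun n : ℕ => ‖q‖ ^ n) atTop (𝓝 0) :=
      tendsto_pow_atTop_nhds_zero_of_lt_one hq' hq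
    have hev : ∀ᶠ n : ℕ in atTop, ‖q‖ ^ n < (1 - ‖q‖) / (2 * (Bs + 1)) := by
      refine hpow.eventually (gt_mem_nhds ?_)
      positivity
    obtain ⟨N, hN⟩ := hev.exists
    have hv0 : (0:ℝ) < (1 - ‖q‖)⁻¹ := by positivity
    have hv : (1 - ‖q‖) * (1 - ‖q‖)⁻¹ = 1 := mul_inv_cancel₀ hq1.ne'
    have hpq : ‖q‖ ^ (N+1) ≤ ‖q‖ ^ N := pow_le_pow_of_le_one hq' hq.le (Nat.le_succ N)
    have hNlt : ‖q‖ ^ N * (2 * (Bs + 1)) < 1 - ‖q‖ := by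
      exact (lt_div_iff₀ (by positivity : (0:ℝ) < 2 * (Bs + 1))).1 hN
    have htail : Bs * (‖q‖ ^ (N+1) * (1 - ‖q‖)⁻¹) ≤ 1/2 := by
      have h2 : ‖q‖ ^ (N+1) * (2 * (Bs + 1)) * (1 - ‖q‖)⁻¹ < 1 := by
        have h3 : ‖q‖ ^ (N+1) * (2 * (Bs + 1)) < 1 - ‖q‖ := by
          nlinarith [pow_nonneg hq' (N+1)]
        calc ‖q‖ ^ (N+1) * (2 * (Bs + 1)) * (1 - ‖q‖)⁻¹
            < (1 - ‖q‖) * (1 - ‖q‖)⁻¹ := by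
              exact mul_lt_mul_of_pos_right h3 hv0
          _ = 1 := hv
      nlinarith [mul_nonneg (mul_nonneg (pow_nonneg hq' (N+1)) hv0.le) hBs0,
        mul_nonneg (pow_nonneg hq' (N+1)) hv0.le]
    have hfac1 : ∀ k, N ≤ k → ∀ j : Fin s, ‖b j * q ^ (k+1)‖ ≤ 1 := by
      intro k hk j
      rw [norm_mul, norm_pow]
      have h1 : ‖b j‖ ≤ Bs := Finset.single_le_sum (fun j _ => norm_nonneg (b j))
        (Finset.mem_univ j)
      have h2 : ‖q‖ ^ (k+1) ≤ ‖q‖ ^ (N+1) :=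
        pow_le_pow_of_le_one hq' hq.le (by omega)
      have h3 : (1:ℝ) ≤ (1 - ‖q‖)⁻¹ := by nlinarith
      have h4 : ‖q‖ ^ (N+1) ≤ ‖q‖ ^ (N+1) * (1 - ‖q‖)⁻¹ := by
        nlinarith [pow_nonneg hq' (N+1)]
      nlinarith [pow_nonneg hq' (k+1), pow_nonneg hq' (N+1),
        mul_nonneg (pow_nonneg hq' (N+1)) hv0.le]
    have hhalf : ∀ n, N ≤ n →
        (1:ℝ)/2 ≤ ‖∏ k ∈ Finset.Ico N n, ∏ j : Fin s, (1 - b j * q ^ (k+1))‖ := by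
      intro n hn
      have hrw : (∏ k ∈ Finset.Ico N n, ∏ j : Fin s, (1 - b j * q ^ (k+1)))
          = ∏ p ∈ (Finset.Ico N n ×ˢ (Finset.univ : Finset (Fin s))),
              (1 - b p.2 * q ^ (p.1+1)) := by
        rw [Finset.prod_product]
      rw [hrw]
      have hb1 : ∀ p ∈ (Finset.Ico N n ×ˢ (Finset.univ : Finset (Fin s))),
          ‖b p.2 * q ^ (p.1+1)‖ ≤ 1 := by
        intro p hp
        rw [Finset.mem_product, Finset.mem_Ico] at hp
        exact hfac1 p.1 hp.1.1 p.2
      have hlb := aux_one_sub_sum_le _ _ hb1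
      have hsum : ∑ p ∈ (Finset.Ico N n ×ˢ (Finset.univ : Finset (Fin s))),
          ‖b p.2 * q ^ (p.1+1)‖ ≤ 1/2 := by
        rw [Finset.sum_product]
        calc ∑ k ∈ Finset.Ico N n, ∑ j : Fin s, ‖b j * q ^ (k+1)‖
            = ∑ k ∈ Finset.Ico N n, Bs * ‖q‖ ^ (k+1) := by
              refine Finset.sum_congr rfl fun k _ => ?_
              simp only [norm_mul, norm_pow]
              rw [← Finset.sum_mul]
          _ = Bs * ∑ k ∈ Finset.Ico N n, ‖q‖ ^ (k+1) := by rw [Finset.mul_sum]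
          _ ≤ Bs * (‖q‖^(N+1) * (1 - ‖q‖)⁻¹) :=
              mul_le_mul_of_nonneg_left (hgeoIco N n) hBs0
          _ ≤ 1/2 := htail
      linarith
    have hne : (Finset.range (N+1)).Nonempty := ⟨0, by simp⟩
    set m : ℝ := (Finset.range (N+1)).inf' hne (fun k => ‖genPoch b q k‖) with hm
    have hm0 : 0 < m := by
      rw [hm, Finset.lt_inf'_iff]
      exact fun k _ => norm_pos_iff.2 (hBne k)
    refine ⟨m/2, by positivity, fun n => ?_⟩
    rcases le_or_gt n N with h | h
    · have : m ≤ ‖genPoch b q n‖ := Finset.inf'_le _ (by simp; omega)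
      linarith
    · rw [genPoch_split b q h.le, norm_mul]
      have h1 : m ≤ ‖genPoch b q N‖ := Finset.inf'_le _ (by simp)
      have h2 := hhalf n h.le
      nlinarith [norm_nonneg (genPoch b q N),
        norm_nonneg (∏ k ∈ Finset.Ico N n, ∏ j : Fin s, (1 - b j * q^(k+1)))]
  -- uniform upper bound on ‖genPoch a q n‖
  obtain ⟨Ma, hMa0, hMa⟩ : ∃ Ma : ℝ, 0 < Ma ∧ ∀ n, ‖genPoch a q n‖ ≤ Ma := by
    refine ⟨Real.exp ((∑ i : Fin r, ‖a i‖) * (1 - ‖q‖)⁻¹), Real.exp_pos _, fun n => ?_⟩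
    rw [genPoch_prod]
    refine le_trans (aux_norm_prod_le _ (fun p : Fin r × ℕ => a p.1 * q ^ (p.2+1))) ?_
    refine le_trans (aux_prod_le_exp _ _ (fun p _ => norm_nonneg _)) ?_
    apply Real.exp_le_exp.2
    rw [Finset.sum_product]
    calc ∑ i : Fin r, ∑ k ∈ Finset.range n, ‖a i * q ^ (k+1)‖
        = ∑ i : Fin r, ‖a i‖ * ∑ k ∈ Finset.range n, ‖q‖^(k+1) := by
          refine Finset.sum_congr rfl fun i _ => ?_
          rw [Finset.mul_sum]
          exact Finset.sum_congr rfl fun k _ => by rw [norm_mul, norm_pow]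
      _ ≤ ∑ i : Fin r, ‖a i‖ * (1 - ‖q‖)⁻¹ :=
          Finset.sum_le_sum fun i _ => mul_le_mul_of_nonneg_left (hgeo n) (norm_nonneg _)
      _ = (∑ i : Fin r, ‖a i‖) * (1 - ‖q‖)⁻¹ := by rw [Finset.sum_mul]
  -- alternative formula for c
  have hcval : ∀ n, c n = (-1) ^ (n + 1) *
      ((∏ j : Fin s, (1 - b j * q ^ (n + 1))) - ∏ i : Fin r, (1 - a i * q ^ (n + 1)))
      * genPoch a q n / genPoch b q (n + 1) := by
    intro n
    rw [hc_def]
    simp only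
    rw [hα (q ^ (n + 1)), hβ (q ^ (n + 1))]
    ring
  -- geometric bound on c
  obtain ⟨K, hK0, hK⟩ : ∃ K : ℝ, 0 ≤ K ∧ ∀ n, ‖c n‖ ≤ K * ‖q‖ ^ n := by
    have hPa0 : (0:ℝ) ≤ ∏ i : Fin r, (1 + ‖a i‖) := Finset.prod_nonneg fun i _ => by positivity
    have hPb0 : (0:ℝ) ≤ ∏ j : Fin s, (1 + ‖b j‖) := Finset.prod_nonneg fun j _ => by positivity
    have hAs0 : (0:ℝ) ≤ ∑ i : Fin r, ‖a i‖ := Finset.sum_nonneg fun i _ => norm_nonneg _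
    have hBs0 : (0:ℝ) ≤ ∑ j : Fin s, ‖b j‖ := Finset.sum_nonneg fun j _ => norm_nonneg _
    set Pa : ℝ := ∏ i : Fin r, (1 + ‖a i‖)
    set Pb : ℝ := ∏ j : Fin s, (1 + ‖b j‖)
    set As : ℝ := ∑ i : Fin r, ‖a i‖
    set Bs : ℝ := ∑ j : Fin s, ‖b j‖
    refine ⟨(Bs * Pb + As * Pa) * Ma / δ * ‖q‖, by positivity, fun n => ?_⟩
    rw [hcval n, norm_div, norm_mul, norm_mul, norm_pow, norm_neg, norm_one, one_pow, one_mul]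
    have hx1 : ‖q‖^(n+1) ≤ 1 := pow_le_one₀ hq' hq.le
    have hDa : ‖(∏ i : Fin r, (1 - a i * q^(n+1))) - 1‖ ≤ As * ‖q‖^(n+1) * Pa := by
      refine (aux_prod_sub_one Finset.univ (fun i => a i * q^(n+1))).trans ?_
      have e1 : ∑ i : Fin r, ‖a i * q^(n+1)‖ = As * ‖q‖^(n+1) := by
        simp only [norm_mul, norm_pow]
        rw [← Finset.sum_mul]
      have e2 : ∏ i : Fin r, (1 + ‖a i * q^(n+1)‖) ≤ Pa := by
        refine Finset.prod_le_prod (fun i _ => by positivity) (fun i _ => ?_)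
        rw [norm_mul, norm_pow]
        nlinarith [norm_nonneg (a i), pow_nonneg hq' (n+1)]
      rw [e1]
      exact mul_le_mul_of_nonneg_left e2 (by positivity)
    have hDb : ‖(∏ j : Fin s, (1 - b j * q^(n+1))) - 1‖ ≤ Bs * ‖q‖^(n+1) * Pb := by
      refine (aux_prod_sub_one Finset.univ (fun j => b j * q^(n+1))).trans ?_
      have e1 : ∑ j : Fin s, ‖b j * q^(n+1)‖ = Bs * ‖q‖^(n+1) := by
        simp only [norm_mul, norm_pow]
        rw [← Finset.sum_mul]
      have e2 : ∏ j : Fin s, (1 + ‖b j * q^(n+1)‖) ≤ Pb := by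
        refine Finset.prod_le_prod (fun j _ => by positivity) (fun j _ => ?_)
        rw [norm_mul, norm_pow]
        nlinarith [norm_nonneg (b j), pow_nonneg hq' (n+1)]
      rw [e1]
      exact mul_le_mul_of_nonneg_left e2 (by positivity)
    have hD : ‖(∏ j : Fin s, (1 - b j * q^(n+1))) - ∏ i : Fin r, (1 - a i * q^(n+1))‖
        ≤ (Bs * Pb + As * Pa) * ‖q‖^(n+1) := by
      have hre : (∏ j : Fin s, (1 - b j * q^(n+1))) - ∏ i : Fin r, (1 - a i * q^(n+1))
          = ((∏ j : Fin s, (1 - b j * q^(n+1))) - 1)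
            - ((∏ i : Fin r, (1 - a i * q^(n+1))) - 1) := by ring
      rw [hre]
      calc ‖_ - _‖ ≤ ‖(∏ j : Fin s, (1 - b j * q^(n+1))) - 1‖
            + ‖(∏ i : Fin r, (1 - a i * q^(n+1))) - 1‖ := norm_sub_le _ _
        _ ≤ (Bs * Pb + As * Pa) * ‖q‖^(n+1) := by nlinarith
    calc ‖(∏ j : Fin s, (1 - b j * q^(n+1))) - ∏ i : Fin r, (1 - a i * q^(n+1))‖
          * ‖genPoch a q n‖ / ‖genPoch b q (n+1)‖
        ≤ ((Bs * Pb + As * Pa) * ‖q‖^(n+1)) * Ma / δ := by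
          apply div_le_div₀ (by positivity)
            (mul_le_mul hD (hMa n) (norm_nonneg _) (by positivity)) hδ0 (hδ (n+1))
      _ = ((Bs * Pb + As * Pa) * Ma / δ * ‖q‖) * ‖q‖^n := by
          rw [pow_succ]; ring
  have hcsum : Summable c := by
    refine Summable.of_norm_bounded (g := fun n => K * ‖q‖ ^ n)
      ((summable_geometric_of_lt_one hq' hq).mul_left K) hK
  have hncsum : Summable fun n => ‖c n‖ := hcsum.norm  -- ?
  -- the key two-term identity
  have key : ∀ n, t n + t (n + 1) = -(c n) := by
    intro n
    rw [hcval n, ht_def]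
    simp only
    rw [genPoch_succ a q n, genPoch_succ b q n, pow_succ]
    have h1 := hBne n
    have h2 := hPbne n
    set PA := ∏ i : Fin r, (1 - a i * q ^ (n + 1)) with hPA
    set PB := ∏ j : Fin s, (1 - b j * q ^ (n + 1)) with hPB
    field_simp
    ring
  have ht0 : t 0 = 1 := by
    rw [ht_def]; simp [genPoch_zero]
  have hS0 : S 0 = 1 := by
    rw [hS_def]; simpa using ht0
  have hSsucc : ∀ k, S (k + 1) = S k + t (k + 1) := by
    intro k; rw [hS_def]; exact Finset.sum_range_succ t (k + 1)
  have hu : ∀ k, S k + S (k + 1) = 1 - ∑ n ∈ Finset.range (k + 1), c n := by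
    intro k
    induction k with
    | zero =>
      rw [hSsucc 0, hS0, Finset.sum_range_one]
      linear_combination key 0 - ht0
    | succ k ih =>
      rw [hSsucc (k + 1), hSsucc k, Finset.sum_range_succ]
      rw [hSsucc k] at ih
      linear_combination ih + key (k + 1)
  have hstep2 : ∀ k, S (k + 2) = S k - c (k + 1) := by
    intro k
    have h1 := hu k
    have h2 := hu (k + 1)
    rw [Finset.sum_range_succ] at h2
    linear_combination h2 - h1
  -- uniform bound on S
  obtain ⟨Cb, hCb0, hCb⟩ : ∃ Cb : ℝ, 0 ≤ Cb ∧ ∀ k, ‖S k‖ ≤ Cb := by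
    have hQ : ∀ k, ‖S k‖ ≤ 1 + ∑ n ∈ Finset.range k, ‖c n‖ ∧
        ‖S (k+1)‖ ≤ 1 + ∑ n ∈ Finset.range (k+1), ‖c n‖ := by
      intro k
      induction k with
      | zero =>
        constructor
        · rw [hS0]
          simp
        · have hS1 : S 1 = -c 0 := by
            have h0 := hu 0
            rw [hS0, Finset.sum_range_one] at h0
            linear_combination h0
          rw [hS1, Finset.sum_range_one, norm_neg]
          linarith [norm_nonneg (c 0)]
      | succ k ih =>
        refine ⟨ih.2, ?_⟩
        rw [show k + 1 + 1 = k + 2 from rfl, hstep2 k]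
        calc ‖S k - c (k+1)‖ ≤ ‖S k‖ + ‖c (k+1)‖ := norm_sub_le _ _
          _ ≤ (1 + ∑ n ∈ Finset.range k, ‖c n‖) + ‖c (k+1)‖ := by linarith [ih.1]
          _ ≤ 1 + ∑ n ∈ Finset.range (k+2), ‖c n‖ := by
              rw [Finset.sum_range_succ, Finset.sum_range_succ]
              linarith [norm_nonneg (c k)]
    have htn : (0:ℝ) ≤ ∑' n, ‖c n‖ := tsum_nonneg fun n => norm_nonneg _
    refine ⟨1 + ∑' n, ‖c n‖, by linarith, fun k => ?_⟩
    refine (hQ k).1.trans ?_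
    have := Summable.sum_le_tsum (Finset.range k) (fun n _ => norm_nonneg _) hncsum
    linarith
  -- convergence of S k + S (k+1)
  have htc : Tendsto (fun k => ∑ n ∈ Finset.range (k + 1), c n) atTop (𝓝 C) := by
    exact (hcsum.hasSum.tendsto_sum_nat).comp (tendsto_add_atTop_nat 1)
  have hulim : Tendsto (fun k => S k + S (k + 1)) atTop (𝓝 (1 - C)) := by
    refine Tendsto.congr (fun k => (hu k).symm) (tendsto_const_nhds.sub htc)
  have h1 : Tendsto (fun N : ℕ =>
      (∑ k ∈ Finset.range N, (S k + S (k + 1))) / N) atTop (𝓝 (1 - C)) :=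
    cesaro_complex hulim
  have h2 : Tendsto (fun N : ℕ => (S 0 - S N) / (N : ℂ)) atTop (𝓝 0) := by
    refine squeeze_zero_norm' (a := fun N : ℕ => (2 * Cb) / (N : ℝ)) ?_
      (tendsto_const_div_atTop_nhds_zero_nat (2 * Cb))
    filter_upwards [eventually_ge_atTop 1] with N hN
    have hN0 : (0:ℝ) < (N:ℝ) := by exact_mod_cast hN
    rw [norm_div]
    have hcast : ‖((N : ℕ) : ℂ)‖ = (N : ℝ) := by simp
    rw [hcast]
    refine (div_le_div_iff_of_pos_right hN0).2 ?_
    calc ‖S 0 - S N‖ ≤ ‖S 0‖ + ‖S N‖ := norm_sub_le _ _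
      _ ≤ 2 * Cb := by linarith [hCb 0, hCb N]
  have hmain : Tendsto (fun N : ℕ =>
      ((∑ k ∈ Finset.range N, (S k + S (k + 1))) / N + (S 0 - S N) / N) / 2) atTop
      (𝓝 ((1 - C) / 2)) := by
    have := (h1.add h2).div_const 2
    simpa using this
  refine hmain.congr fun N => ?_
  have hsum : ∑ k ∈ Finset.range N, (S k + S (k + 1))
      = 2 * (∑ k ∈ Finset.range N, S k) - S 0 + S N := by
    rw [Finset.sum_add_distrib]
    have e1 : ∑ k ∈ Finset.range N, S (k + 1) = (∑ k ∈ Finset.range N, S k) + S N - S 0 := by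
      have := Finset.sum_range_succ' S N
      rw [Finset.sum_range_succ] at this
      linear_combination -this
    rw [e1]; ring
  rw [← add_div, hsum]
  ring
end

section
/- For complex $q$ with $|q|<1$, Andrews' identity holds: $\sum_{n=0}^\infty \frac{q^{n(n+1)/2}}{(-q;q)_n} = 1 + \sum_{n=0}^\infty (-1)^n q^{n+1}(q;q)_n$, both sides converging absolutely. -/
open Filter Topology

namespace AZ

noncomputable def a (q : ℂ) (k n : ℕ) : ℂ :=
  q ^ (n * (n + 1) / 2 + k * n) / ∏ j ∈ Finset.range n, (1 + q ^ (j + 1 + k))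

noncomputable def t (q : ℂ) (k n : ℕ) : ℂ :=
  (-1 : ℂ) ^ n * q ^ ((n + 1) * (k + 1)) * qPoch q n

noncomputable def u (q : ℂ) (k : ℕ) : ℂ := q ^ (k + 1) / (1 + q ^ (k + 1))

noncomputable def b (q : ℂ) (n : ℕ) : ℝ :=
  ‖q‖ ^ (n * (n + 1) / 2) * ((1 - ‖q‖)⁻¹) ^ n

lemma tri_succ (n : ℕ) : (n + 1) * (n + 2) / 2 = n * (n + 1) / 2 + (n + 1) := by
  have h2 : (n + 1) * (n + 2) = n * (n + 1) + 2 * (n + 1) := by ring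
  obtain ⟨c, hc⟩ := Nat.even_mul_succ_self n
  rw [hc] at h2 ⊢
  rw [h2]
  omega

variable (q : ℂ)

lemma hr1 (hq : ‖q‖ < 1) : (0 : ℝ) < 1 - ‖q‖ := by linarith

lemma norm_one_add_pow (hq : ‖q‖ < 1) (m : ℕ) : 1 - ‖q‖ ≤ ‖1 + q ^ (m + 1)‖ := by
  have h1 : ‖(1 : ℂ)‖ ≤ ‖1 + q ^ (m + 1)‖ + ‖q ^ (m + 1)‖ := by
    calc ‖(1 : ℂ)‖ = ‖(1 + q ^ (m + 1)) + (-(q ^ (m + 1)))‖ := by ring_nf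
    _ ≤ ‖1 + q ^ (m + 1)‖ + ‖-(q ^ (m + 1))‖ := norm_add_le _ _
    _ = ‖1 + q ^ (m + 1)‖ + ‖q ^ (m + 1)‖ := by rw [norm_neg]
  have h2 : ‖q ^ (m + 1)‖ ≤ ‖q‖ := by
    rw [norm_pow]
    calc ‖q‖ ^ (m + 1) ≤ ‖q‖ ^ 1 := by
          apply pow_le_pow_of_le_one (norm_nonneg q) hq.le; omega
    _ = ‖q‖ := pow_one _
  simp only [norm_one] at h1
  linarith

lemma one_add_pow_ne (hq : ‖q‖ < 1) (m : ℕ) : 1 + q ^ (m + 1) ≠ 0 := by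
  intro h
  have := norm_one_add_pow q hq m
  rw [h, norm_zero] at this
  linarith


lemma norm_a_le (hq : ‖q‖ < 1) (k n : ℕ) : ‖a q k n‖ ≤ b q n := by
  have hr := hr1 q hq
  have hnum : ‖q‖ ^ (n * (n + 1) / 2 + k * n) ≤ ‖q‖ ^ (n * (n + 1) / 2) :=
    pow_le_pow_of_le_one (norm_nonneg q) hq.le (Nat.le_add_right _ _)
  have hden : (1 - ‖q‖) ^ n ≤ ∏ j ∈ Finset.range n, ‖1 + q ^ (j + 1 + k)‖ := by
    calc (1 - ‖q‖) ^ n = ∏ _j ∈ Finset.range n, (1 - ‖q‖) := by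
          rw [Finset.prod_const, Finset.card_range]
    _ ≤ ∏ j ∈ Finset.range n, ‖1 + q ^ (j + 1 + k)‖ := by
          apply Finset.prod_le_prod (fun _ _ => hr.le)
          intro j _
          have h : j + 1 + k = (j + k) + 1 := by omega
          rw [h]
          exact norm_one_add_pow q hq (j + k)
  have hna : ‖a q k n‖ = ‖q‖ ^ (n * (n + 1) / 2 + k * n) /
      ∏ j ∈ Finset.range n, ‖1 + q ^ (j + 1 + k)‖ := by
    rw [a, norm_div, norm_pow, norm_prod]
  rw [hna, b, div_eq_mul_inv, inv_pow]
  apply mul_le_mul hnum _ (inv_nonneg.2 (Finset.prod_nonneg fun _ _ => norm_nonneg _))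
    (pow_nonneg (norm_nonneg q) _)
  exact inv_anti₀ (pow_pos hr n) hden

lemma ratio_ev (hq : ‖q‖ < 1) :
    ∀ᶠ n : ℕ in atTop, ‖q‖ ^ (n + 1) * (1 - ‖q‖)⁻¹ ≤ 1 / 2 := by
  have h0 : Tendsto (fun n : ℕ => ‖q‖ ^ (n + 1) * (1 - ‖q‖)⁻¹) atTop (𝓝 (0 * (1 - ‖q‖)⁻¹)) := by
    exact ((tendsto_pow_atTop_nhds_zero_of_lt_one (norm_nonneg q) hq).comp
      (tendsto_add_atTop_nat 1)).mul_const _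
  rw [zero_mul] at h0
  exact h0.eventually_le_const (by norm_num)

lemma summable_b (hq : ‖q‖ < 1) : Summable (b q) := by
  apply summable_of_ratio_norm_eventually_le (r := 1 / 2) (by norm_num)
  filter_upwards [ratio_ev q hq] with n hn
  have hb : b q (n + 1) = b q n * (‖q‖ ^ (n + 1) * (1 - ‖q‖)⁻¹) := by
    rw [b, b, tri_succ, pow_add, pow_succ]
    ring
  have hbn : 0 ≤ b q n :=
    mul_nonneg (pow_nonneg (norm_nonneg q) _) (pow_nonneg (inv_nonneg.2 (hr1 q hq).le) _)
  have hbn1 : 0 ≤ b q (n + 1) :=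
    mul_nonneg (pow_nonneg (norm_nonneg q) _) (pow_nonneg (inv_nonneg.2 (hr1 q hq).le) _)
  rw [Real.norm_of_nonneg hbn1, Real.norm_of_nonneg hbn, hb]
  calc b q n * (‖q‖ ^ (n + 1) * (1 - ‖q‖)⁻¹) ≤ b q n * (1 / 2) :=
        mul_le_mul_of_nonneg_left hn hbn
    _ = 1 / 2 * b q n := by ring

lemma summable_a_norm (hq : ‖q‖ < 1) (k : ℕ) : Summable (fun n => ‖a q k n‖) :=
  Summable.of_nonneg_of_le (fun _ => norm_nonneg _) (norm_a_le q hq k) (summable_b q hq)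

lemma a_zero (k : ℕ) : a q k 0 = 1 := by simp [a]

lemma a_succ (hq : ‖q‖ < 1) (k n : ℕ) : a q k (n + 1) = u q k * a q (k + 1) n := by
  have hexp : (n + 1) * ((n + 1) + 1) / 2 + k * (n + 1)
      = (k + 1) + (n * (n + 1) / 2 + (k + 1) * n) := by
    have : (n + 1) + 1 = n + 2 := rfl
    rw [this, tri_succ]
    ring
  rw [a, a, u, hexp, pow_add, Finset.prod_range_succ']
  have hidx : ∀ j : ℕ, j + 1 + 1 + k = j + 1 + (k + 1) := fun j => by omega
  have hidx2 : 0 + 1 + k = k + 1 := by omega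
  simp only [hidx, hidx2]
  rw [mul_comm (∏ j ∈ Finset.range n, (1 + q ^ (j + 1 + (k + 1)))) (1 + q ^ (k + 1))]
  rw [mul_div_mul_comm]


lemma t_zero (k : ℕ) : t q k 0 = q ^ (k + 1) := by simp [t, qPoch]

lemma t_succ (k n : ℕ) :
    t q k (n + 1) + q ^ (k + 1) * t q k n = q ^ (k + 1) * t q (k + 1) n := by
  have hP : qPoch q (n + 1) = qPoch q n * (1 - q ^ (n + 1)) := by
    rw [qPoch, qPoch, Finset.prod_range_succ]
  have e1 : (n + 1 + 1) * (k + 1) = (n + 1) * (k + 1) + (k + 1) := by ring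
  have e2 : (n + 1) * (k + 1 + 1) = (n + 1) * (k + 1) + (n + 1) := by ring
  rw [t, t, t, hP, e1, e2, pow_add, pow_add, pow_succ]
  ring

lemma geom_partial_le (hq : ‖q‖ < 1) (n : ℕ) :
    ∑ j ∈ Finset.range n, ‖q‖ ^ (j + 1) ≤ (1 - ‖q‖)⁻¹ := by
  have h1 : ∑ j ∈ Finset.range n, ‖q‖ ^ (j + 1) ≤ ∑ j ∈ Finset.range n, ‖q‖ ^ j := by
    apply Finset.sum_le_sum
    intro j _
    exact pow_le_pow_of_le_one (norm_nonneg q) hq.le (by omega)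
  have h2 : ∑ j ∈ Finset.range n, ‖q‖ ^ j ≤ (1 - ‖q‖)⁻¹ := by
    have hs := summable_geometric_of_lt_one (norm_nonneg q) hq
    have := Summable.sum_le_tsum (Finset.range n) (fun i _ => pow_nonneg (norm_nonneg q) i) hs
    rwa [tsum_geometric_of_lt_one (norm_nonneg q) hq] at this
  linarith

noncomputable def C (q : ℂ) : ℝ := Real.exp ((1 - ‖q‖)⁻¹)

lemma C_pos : 0 < C q := Real.exp_pos _

lemma qPoch_norm_le (hq : ‖q‖ < 1) (n : ℕ) : ‖qPoch q n‖ ≤ C q := by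
  calc ‖qPoch q n‖ = ∏ j ∈ Finset.range n, ‖1 - q ^ (j + 1)‖ := by rw [qPoch, norm_prod]
    _ ≤ ∏ j ∈ Finset.range n, (1 + ‖q‖ ^ (j + 1)) := by
        apply Finset.prod_le_prod (fun _ _ => norm_nonneg _)
        intro j _
        calc ‖1 - q ^ (j + 1)‖ ≤ ‖(1 : ℂ)‖ + ‖q ^ (j + 1)‖ := norm_sub_le _ _
        _ = 1 + ‖q‖ ^ (j + 1) := by rw [norm_one, norm_pow]
    _ ≤ ∏ j ∈ Finset.range n, Real.exp (‖q‖ ^ (j + 1)) := by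
        apply Finset.prod_le_prod
        · intro j _
          positivity
        · intro j _
          have := Real.add_one_le_exp (‖q‖ ^ (j + 1))
          linarith
    _ = Real.exp (∑ j ∈ Finset.range n, ‖q‖ ^ (j + 1)) := (Real.exp_sum _ _).symm
    _ ≤ C q := Real.exp_le_exp.2 (geom_partial_le q hq n)

lemma norm_t_le (hq : ‖q‖ < 1) (k n : ℕ) : ‖t q k n‖ ≤ C q * ‖q‖ ^ (n + 1) := by
  have h1 : ‖t q k n‖ = ‖q‖ ^ ((n + 1) * (k + 1)) * ‖qPoch q n‖ := by
    rw [t, norm_mul, norm_mul, norm_pow, norm_pow, norm_neg, norm_one, one_pow, one_mul]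
  rw [h1]
  have h2 : ‖q‖ ^ ((n + 1) * (k + 1)) ≤ ‖q‖ ^ (n + 1) :=
    pow_le_pow_of_le_one (norm_nonneg q) hq.le (Nat.le_mul_of_pos_right _ (by omega))
  calc ‖q‖ ^ ((n + 1) * (k + 1)) * ‖qPoch q n‖ ≤ ‖q‖ ^ (n + 1) * C q := by
        apply mul_le_mul h2 (qPoch_norm_le q hq n) (norm_nonneg _)
          (pow_nonneg (norm_nonneg q) _)
    _ = C q * ‖q‖ ^ (n + 1) := by ring

lemma summable_geomC (hq : ‖q‖ < 1) : Summable (fun n : ℕ => C q * ‖q‖ ^ (n + 1)) := by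
  apply Summable.mul_left
  exact (summable_geometric_of_lt_one (norm_nonneg q) hq).comp_injective Nat.succ_injective

lemma summable_t_norm (hq : ‖q‖ < 1) (k : ℕ) : Summable (fun n => ‖t q k n‖) :=
  Summable.of_nonneg_of_le (fun _ => norm_nonneg _) (norm_t_le q hq k) (summable_geomC q hq)

noncomputable def Fs (q : ℂ) (k : ℕ) : ℂ := ∑' n, a q k n
noncomputable def Hs (q : ℂ) (k : ℕ) : ℂ := 1 + ∑' n, t q k n

lemma Fs_rec (hq : ‖q‖ < 1) (k : ℕ) : Fs q k = 1 + u q k * Fs q (k + 1) := by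
  rw [Fs, Summable.tsum_eq_zero_add ((summable_a_norm q hq k).of_norm), a_zero]
  congr 1
  rw [Fs, ← tsum_mul_left]
  exact tsum_congr fun n => a_succ q hq k n

lemma Hs_rec (hq : ‖q‖ < 1) (k : ℕ) : Hs q k = 1 + u q k * Hs q (k + 1) := by
  have hsum : ∀ m, Summable (fun n => t q m n) := fun m => (summable_t_norm q hq m).of_norm
  have hshift : Summable (fun n => t q k (n + 1)) :=
    (summable_nat_add_iff 1).2 (hsum k)
  have key : (1 + q ^ (k + 1)) * (∑' n, t q k n) = q ^ (k + 1) * Hs q (k + 1) := by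
    have h1 : (∑' n, t q k n) = q ^ (k + 1) + ∑' n, t q k (n + 1) := by
      rw [Summable.tsum_eq_zero_add (hsum k), t_zero]
    calc (1 + q ^ (k + 1)) * (∑' n, t q k n)
        = (∑' n, t q k n) + q ^ (k + 1) * (∑' n, t q k n) := by ring
      _ = q ^ (k + 1) + ((∑' n, t q k (n + 1)) + ∑' n, q ^ (k + 1) * t q k n) := by
          rw [tsum_mul_left]
          nth_rewrite 1 [h1]
          ring
      _ = q ^ (k + 1) + ∑' n, (t q k (n + 1) + q ^ (k + 1) * t q k n) := by
          rw [Summable.tsum_add hshift ((hsum k).mul_left _)]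
      _ = q ^ (k + 1) + ∑' n, q ^ (k + 1) * t q (k + 1) n := by
          exact congrArg _ (tsum_congr fun n => t_succ q k n)
      _ = q ^ (k + 1) + q ^ (k + 1) * ∑' n, t q (k + 1) n := by rw [tsum_mul_left]
      _ = q ^ (k + 1) * Hs q (k + 1) := by rw [Hs]; ring
  have hne := one_add_pow_ne q hq k
  rw [Hs]
  congr 1
  rw [u, div_mul_eq_mul_div, eq_div_iff hne]
  linear_combination key


lemma norm_u_le (hq : ‖q‖ < 1) (k : ℕ) : ‖u q k‖ ≤ ‖q‖ ^ (k + 1) * (1 - ‖q‖)⁻¹ := by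
  rw [u, norm_div, norm_pow, div_eq_mul_inv]
  apply mul_le_mul_of_nonneg_left _ (pow_nonneg (norm_nonneg q) _)
  exact inv_anti₀ (hr1 q hq) (norm_one_add_pow q hq k)

noncomputable def M (q : ℂ) : ℝ := (∑' n, b q n) + (1 + ∑' n : ℕ, C q * ‖q‖ ^ (n + 1))

lemma norm_diff_le (hq : ‖q‖ < 1) (k : ℕ) : ‖Fs q k - Hs q k‖ ≤ M q := by
  have hF : ‖Fs q k‖ ≤ ∑' n, b q n := by
    calc ‖Fs q k‖ ≤ ∑' n, ‖a q k n‖ := norm_tsum_le_tsum_norm (summable_a_norm q hq k)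
      _ ≤ ∑' n, b q n := Summable.tsum_le_tsum (norm_a_le q hq k) (summable_a_norm q hq k)
          (summable_b q hq)
  have hH : ‖Hs q k‖ ≤ 1 + ∑' n : ℕ, C q * ‖q‖ ^ (n + 1) := by
    rw [Hs]
    calc ‖1 + ∑' n, t q k n‖ ≤ ‖(1 : ℂ)‖ + ‖∑' n, t q k n‖ := norm_add_le _ _
      _ ≤ 1 + ∑' n : ℕ, C q * ‖q‖ ^ (n + 1) := by
          rw [norm_one]
          have : ‖∑' n, t q k n‖ ≤ ∑' n : ℕ, C q * ‖q‖ ^ (n + 1) := by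
            calc ‖∑' n, t q k n‖ ≤ ∑' n, ‖t q k n‖ :=
                  norm_tsum_le_tsum_norm (summable_t_norm q hq k)
              _ ≤ ∑' n : ℕ, C q * ‖q‖ ^ (n + 1) := Summable.tsum_le_tsum (norm_t_le q hq k)
                  (summable_t_norm q hq k) (summable_geomC q hq)
          linarith
  calc ‖Fs q k - Hs q k‖ ≤ ‖Fs q k‖ + ‖Hs q k‖ := norm_sub_le _ _
    _ ≤ M q := by rw [M]; linarith

lemma diff_rec (hq : ‖q‖ < 1) (k : ℕ) :
    Fs q k - Hs q k = u q k * (Fs q (k + 1) - Hs q (k + 1)) := by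
  rw [Fs_rec q hq k, Hs_rec q hq k]
  ring

lemma diff_prod (hq : ‖q‖ < 1) (K : ℕ) :
    Fs q 0 - Hs q 0 = (∏ i ∈ Finset.range K, u q i) * (Fs q K - Hs q K) := by
  induction K with
  | zero => simp
  | succ K ih =>
      rw [ih, Finset.prod_range_succ, diff_rec q hq K]
      ring

lemma main_eq (hq : ‖q‖ < 1) : Fs q 0 = Hs q 0 := by
  -- choose N with ‖u q i‖ ≤ 1/2 for i ≥ N
  have hev : ∀ᶠ i : ℕ in atTop, ‖u q i‖ ≤ 1 / 2 := by
    filter_upwards [ratio_ev q hq] with i hi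
    exact le_trans (norm_u_le q hq i) hi
  obtain ⟨N, hN⟩ := eventually_atTop.1 hev
  set D := Fs q 0 - Hs q 0 with hD
  have hbound : ∀ m : ℕ,
      ‖D‖ ≤ ((∏ i ∈ Finset.range N, ‖u q i‖) * M q) * (1 / 2) ^ m := by
    intro m
    have h1 : ‖D‖ ≤ (∏ i ∈ Finset.range (N + m), ‖u q i‖) * M q := by
      rw [hD, diff_prod q hq (N + m), norm_mul, norm_prod]
      exact mul_le_mul_of_nonneg_left (norm_diff_le q hq (N + m))
        (Finset.prod_nonneg fun _ _ => norm_nonneg _)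
    have h2 : ∏ i ∈ Finset.range (N + m), ‖u q i‖
        ≤ (∏ i ∈ Finset.range N, ‖u q i‖) * (1 / 2) ^ m := by
      rw [Finset.prod_range_add]
      apply mul_le_mul_of_nonneg_left _ (Finset.prod_nonneg fun _ _ => norm_nonneg _)
      calc ∏ i ∈ Finset.range m, ‖u q (N + i)‖
          ≤ ∏ _i ∈ Finset.range m, (1 / 2 : ℝ) := by
            apply Finset.prod_le_prod (fun _ _ => norm_nonneg _)
            intro i _
            exact hN (N + i) (Nat.le_add_right _ _)
        _ = (1 / 2 : ℝ) ^ m := by rw [Finset.prod_const, Finset.card_range]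
    calc ‖D‖ ≤ (∏ i ∈ Finset.range (N + m), ‖u q i‖) * M q := h1
      _ ≤ ((∏ i ∈ Finset.range N, ‖u q i‖) * (1 / 2) ^ m) * M q := by
          apply mul_le_mul_of_nonneg_right h2
          have := norm_diff_le q hq 0
          have h0 : (0 : ℝ) ≤ M q := le_trans (norm_nonneg _) this
          exact h0
      _ = ((∏ i ∈ Finset.range N, ‖u q i‖) * M q) * (1 / 2) ^ m := by ring
  have htend : Tendsto
      (fun m : ℕ => ((∏ i ∈ Finset.range N, ‖u q i‖) * M q) * (1 / 2) ^ m)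
      atTop (𝓝 0) := by
    have : Tendsto (fun m : ℕ => ((1 : ℝ) / 2) ^ m) atTop (𝓝 0) :=
      tendsto_pow_atTop_nhds_zero_of_lt_one (by norm_num) (by norm_num)
    simpa using this.const_mul ((∏ i ∈ Finset.range N, ‖u q i‖) * M q)
  have : ‖D‖ ≤ 0 := ge_of_tendsto' htend hbound
  have : D = 0 := norm_le_zero_iff.1 this
  exact sub_eq_zero.1 this

end AZ


open AZ in
theorem andrews_identity (q : ℂ) (hq : ‖q‖ < 1) :
    Summable (fun n : ℕ => ‖q ^ (n * (n + 1) / 2) / negPoch q n‖) ∧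
    Summable (fun n : ℕ => ‖(-1 : ℂ) ^ n * q ^ (n + 1) * qPoch q n‖) ∧
    (∑' n : ℕ, q ^ (n * (n + 1) / 2) / negPoch q n)
      = 1 + ∑' n : ℕ, (-1 : ℂ) ^ n * q ^ (n + 1) * qPoch q n := by
  have ha : ∀ n : ℕ, a q 0 n = q ^ (n * (n + 1) / 2) / negPoch q n := by
    intro n
    rw [a, negPoch]
    simp
  have ht : ∀ n : ℕ, t q 0 n = (-1 : ℂ) ^ n * q ^ (n + 1) * qPoch q n := by
    intro n
    rw [t]
    simp
  refine ⟨?_, ?_, ?_⟩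
  · exact (summable_a_norm q hq 0).congr fun n => by rw [ha n]
  · exact (summable_t_norm q hq 0).congr fun n => by rw [ht n]
  · have h1 : (∑' n : ℕ, q ^ (n * (n + 1) / 2) / negPoch q n) = Fs q 0 := by
      rw [Fs]
      exact tsum_congr fun n => (ha n).symm
    have h2 : (1 + ∑' n : ℕ, (-1 : ℂ) ^ n * q ^ (n + 1) * qPoch q n) = Hs q 0 := by
      rw [Hs]
      exact congrArg _ (tsum_congr fun n => (ht n).symm)
    rw [h1, h2]
    exact main_eq q hq
end
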